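/- arXiv:2202.09563 — 8 statements merged into one kernel-verified Lean document; each statement's English description precedes it below -/
import Mathlib

section
/- Let G be a finite group and x ∈ G. Then the order of x divides the cardinality of Sol_G(x). -/
def Sol {G : Type*} [Group G] (x : G) : Set G :=
  {y | IsSolvable ↥(Subgroup.closure {x, y})}

lemma closure_pair_mul {G : Type*} [Group G] (x y h : G)
    (hh : h ∈ Subgroup.zpowers x) :
    Subgroup.closure {x, y * h} = Subgroup.closure {x, y} := by
  have hx1 : x ∈ Subgroup.closure ({x, y} : Set G) :=
    Subgroup.subset_closure (by simp)
  have hx2 : x ∈ Subgroup.closure ({x, y * h} : Set G) :=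
    Subgroup.subset_closure (by simp)
  have h1 : h ∈ Subgroup.closure ({x, y} : Set G) := by
    obtain ⟨k, rfl⟩ := hh; exact zpow_mem hx1 k
  have h2 : h ∈ Subgroup.closure ({x, y * h} : Set G) := by
    obtain ⟨k, rfl⟩ := hh; exact zpow_mem hx2 k
  apply le_antisymm
  · rw [Subgroup.closure_le]
    rintro z (rfl | rfl)
    · exact hx1
    · exact mul_mem (Subgroup.subset_closure (by simp)) h1
  · rw [Subgroup.closure_le]
    rintro z (rfl | rfl)
    · exact hx2
    · have hyh : z * h ∈ Subgroup.closure ({x, z * h} : Set G) :=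
        Subgroup.subset_closure (by simp)
      simpa using mul_mem hyh (inv_mem h2)

lemma sol_mul_mem {G : Type*} [Group G] {x y : G} (hy : y ∈ Sol x) {h : G}
    (hh : h ∈ Subgroup.zpowers x) : y * h ∈ Sol x := by
  simp only [Sol, Set.mem_setOf_eq] at hy ⊢
  rw [closure_pair_mul x y h hh]
  exact hy

theorem stmt2 {G : Type*} [Group G] [Finite G] (x : G) :
    orderOf x ∣ Nat.card (Sol x) := by
  classical
  have : Fintype G := Fintype.ofFinite G
  set H := Subgroup.zpowers x with hH
  set f : Sol x → G ⧸ H := fun y => ((y : G) : G ⧸ H) with hf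
  have key : ∀ q : G ⧸ H, orderOf x ∣ Nat.card {y : Sol x // f y = q} := by
    intro q
    rcases isEmpty_or_nonempty {y : Sol x // f y = q} with hq | ⟨⟨⟨y₀, hy₀⟩, hq0⟩⟩
    · simp [Nat.card_of_isEmpty]
    · have e : H ≃ {y : Sol x // f y = q} :=
        { toFun := fun h => ⟨⟨y₀ * h, sol_mul_mem hy₀ h.2⟩, by
            simp only [hf]
            rw [QuotientGroup.mk_mul_of_mem _ h.2]
            exact hq0⟩
          invFun := fun z => ⟨y₀⁻¹ * (z : Sol x), by
            have : f z = f ⟨y₀, hy₀⟩ := z.2.trans hq0.symm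
            simpa [hf, QuotientGroup.eq] using this.symm⟩
          left_inv := fun h => by ext; simp
          right_inv := fun z => by ext; simp }
      rw [← Nat.card_congr e, Nat.card_zpowers]
  have hsigma : Nat.card (Sol x) = ∑ q : G ⧸ H, Nat.card {y : Sol x // f y = q} := by
    rw [← Nat.card_congr (Equiv.sigmaFiberEquiv f)]
    simp [Nat.card_eq_fintype_card, Fintype.card_sigma]
  rw [hsigma]
  exact Finset.dvd_sum fun q _ => key q
end

section
/- Let G be a finite group and x ∈ G. Then |C_G(x)| divides |Sol_G(x)|. -/
open Subgroup MulAction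

section Helpers

lemma isSolvable_iff_of_mulEquiv {H K : Type*} [Group H] [Group K] (e : H ≃* K) :
    IsSolvable H ↔ IsSolvable K := by
  constructor
  · intro h
    haveI : Group.IsSolvable H := h
    exact solvable_of_surjective (f := e.toMonoidHom) e.surjective
  · intro h
    haveI : Group.IsSolvable K := h
    exact solvable_of_surjective (f := e.symm.toMonoidHom) e.symm.surjective

variable {G : Type*} [Group G]

lemma mem_sol_iff {x y : G} : y ∈ Sol x ↔ IsSolvable ↥(Subgroup.closure {x, y}) := Iff.rfl

lemma mem_sol_subgroup {L : Subgroup G} {x y : G} (hx : x ∈ L) (hy : y ∈ L) :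
    (⟨y, hy⟩ : L) ∈ Sol (⟨x, hx⟩ : L) ↔ y ∈ Sol x := by
  have hmap : (Subgroup.closure ({⟨x, hx⟩, ⟨y, hy⟩} : Set L)).map L.subtype
      = Subgroup.closure {x, y} := by
    rw [MonoidHom.map_closure, Set.image_pair]
    rfl
  have e := Subgroup.equivMapOfInjective (Subgroup.closure ({⟨x, hx⟩, ⟨y, hy⟩} : Set L))
      L.subtype L.subtype_injective
  rw [hmap] at e
  exact isSolvable_iff_of_mulEquiv e

lemma sol_conj {x c y : G} (hc : c * x = x * c) (hy : y ∈ Sol x) :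
    c * y * c⁻¹ ∈ Sol x := by
  have hmap : (Subgroup.closure ({x, y} : Set G)).map (MulAut.conj c).toMonoidHom
      = Subgroup.closure {x, c * y * c⁻¹} := by
    rw [MonoidHom.map_closure, Set.image_pair]
    congr 2
    show c * x * c⁻¹ = x
    rw [hc, mul_inv_cancel_right]
  have e := Subgroup.equivMapOfInjective (Subgroup.closure ({x, y} : Set G))
      (MulAut.conj c).toMonoidHom (MulAut.conj c).injective
  rw [hmap] at e
  exact (isSolvable_iff_of_mulEquiv e).mp hy

lemma card_preimage_hom {G Q : Type*} [Group G] [Group Q] (π : G →* Q)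
    (hsur : Function.Surjective π) (S : Set Q) :
    Nat.card (π ⁻¹' S) = Nat.card π.ker * Nat.card S := by
  have hσ : ∀ q : Q, π (Function.surjInv hsur q) = q := Function.surjInv_eq hsur
  let e : π.ker × S ≃ (π ⁻¹' S : Set G) :=
    { toFun := fun p => ⟨Function.surjInv hsur p.2.1 * p.1.1, by
        have hk : π p.1.1 = 1 := p.1.2
        simp only [Set.mem_preimage, map_mul, hσ, hk, mul_one]
        exact p.2.2⟩
      invFun := fun y => (⟨(Function.surjInv hsur (π y.1))⁻¹ * y.1, by
          have : π ((Function.surjInv hsur (π y.1))⁻¹ * y.1) = 1 := by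
            simp [hσ]
          exact this⟩,
        ⟨π y.1, y.2⟩)
      left_inv := fun p => by
        obtain ⟨⟨k, hk⟩, ⟨s, hs⟩⟩ := p
        have hk' : π k = 1 := hk
        have h1 : π (Function.surjInv hsur s * k) = s := by
          simp [map_mul, hσ, hk']
        refine Prod.ext (Subtype.ext ?_) (Subtype.ext ?_)
        · simp only [h1]
          group
        · exact h1
      right_inv := fun y => by
        apply Subtype.ext
        simp }
  rw [← Nat.card_congr e, Nat.card_prod]

end Helpers


section Counting

variable {A X : Type*} [Group A] [Finite A]

lemma card_dvd_sum_aux [Fintype X] [MulAction A X] (f : X → ℕ)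
    (hf : ∀ (a : A) (x : X), f (a • x) = f x) :
    ∀ (n : ℕ) (T : Finset X), T.card ≤ n →
      (∀ (a : A) (x : X), x ∈ T → a • x ∈ T) →
      (∀ x ∈ T, Nat.card (stabilizer A x) ∣ f x) →
      Nat.card A ∣ ∑ x ∈ T, f x := by
  classical
  intro n
  induction n with
  | zero =>
    intro T hT _ _
    rw [Nat.le_zero, Finset.card_eq_zero] at hT
    subst hT; simp
  | succ n ih =>
    intro T hTcard hT hd
    rcases T.eq_empty_or_nonempty with rfl | ⟨x, hx⟩
    · simp
    · letI : Fintype A := Fintype.ofFinite A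
      have horb : (orbit A x).Finite := Set.toFinite _
      set O : Finset X := horb.toFinset with hO
      have hOsub : O ⊆ T := by
        intro z hz
        rw [hO, Set.Finite.mem_toFinset] at hz
        obtain ⟨a, rfl⟩ := hz
        exact hT a x hx
      have hxO : x ∈ O := by
        rw [hO, Set.Finite.mem_toFinset]
        exact mem_orbit_self x
      have hOsum : ∑ z ∈ O, f z = O.card * f x := by
        rw [Finset.sum_congr rfl (g := fun _ => f x) (fun z hz => by
          rw [hO, Set.Finite.mem_toFinset] at hz
          obtain ⟨a, rfl⟩ := hz
          exact hf a x), Finset.sum_const, smul_eq_mul]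
      have hcardO : O.card = Nat.card (orbit A x) := by
        rw [hO, Nat.card_coe_set_eq, Set.ncard_eq_toFinset_card _ horb]
      have horbstab : Nat.card (orbit A x) * Nat.card (stabilizer A x) = Nat.card A := by
        letI : Fintype (orbit A x) := horb.fintype
        letI : Fintype (stabilizer A x) := Fintype.ofFinite _
        simp only [Nat.card_eq_fintype_card]
        exact MulAction.card_orbit_mul_card_stabilizer_eq_card_group A x
      obtain ⟨m, hm⟩ := hd x hx
      have h1 : Nat.card A ∣ ∑ z ∈ O, f z := by
        refine ⟨m, ?_⟩
        rw [hOsum, hcardO, hm, ← horbstab]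
        ring
      have h2 : Nat.card A ∣ ∑ z ∈ T \ O, f z := by
        refine ih (T \ O) ?_ ?_ ?_
        · have hlt : (T \ O).card < T.card := by
            apply Finset.card_lt_card
            constructor
            · exact Finset.sdiff_subset
            · intro hsub
              have := hsub (hOsub hxO)
              rw [Finset.mem_sdiff] at this
              exact this.2 hxO
          omega
        · intro a z hz
          rw [Finset.mem_sdiff] at hz ⊢
          refine ⟨hT a z hz.1, fun hmem => hz.2 ?_⟩
          rw [hO, Set.Finite.mem_toFinset] at hmem ⊢
          obtain ⟨b, hb⟩ := hmem
          refine ⟨a⁻¹ * b, ?_⟩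
          show (a⁻¹ * b) • x = z
          have hb' : b • x = a • z := hb
          rw [mul_smul, hb', inv_smul_smul]
        · intro z hz
          exact hd z (Finset.mem_sdiff.mp hz).1
      calc Nat.card A ∣ ∑ z ∈ T \ O, f z + ∑ z ∈ O, f z := dvd_add h2 h1
        _ = ∑ z ∈ T, f z := Finset.sum_sdiff hOsub

lemma card_dvd_sum [Fintype X] [MulAction A X] (f : X → ℕ)
    (hf : ∀ (a : A) (x : X), f (a • x) = f x) (T : Finset X)
    (hT : ∀ (a : A) (x : X), x ∈ T → a • x ∈ T)
    (hd : ∀ x ∈ T, Nat.card (stabilizer A x) ∣ f x) :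
    Nat.card A ∣ ∑ x ∈ T, f x :=
  card_dvd_sum_aux f hf T.card T le_rfl hT hd

end Counting



lemma key_dvd {A X : Type*} [Group A] [Finite A] [Finite X] [MulAction A X]
    (h : ∀ a : A, a ≠ 1 →
      Nat.card (centralizer ({a} : Set A) : Subgroup A) ∣ Nat.card (fixedBy X a)) :
    Nat.card A ∣ Nat.card X := by
  classical
  letI : Fintype X := Fintype.ofFinite X
  letI : Fintype A := Fintype.ofFinite A
  have h1 : Nat.card A ∣ ∑ y : X, Nat.card (stabilizer A y) := by
    refine card_dvd_sum _ ?_ Finset.univ (fun _ _ _ => Finset.mem_univ _) (fun y _ => dvd_rfl)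
    intro a y
    rw [MulAction.stabilizer_smul_eq_stabilizer_map_conj]
    exact (Nat.card_congr (Subgroup.equivMapOfInjective (stabilizer A y)
      (MulAut.conj a).toMonoidHom (MulAut.conj a).injective).toEquiv).symm
  have hstab : ∀ y : X, Nat.card (stabilizer A y)
      = (Finset.univ.filter (fun a : A => a • y = y)).card := by
    intro y
    rw [Nat.card_eq_fintype_card, ← Fintype.card_subtype]
    exact Fintype.card_congr (Equiv.subtypeEquivRight (fun a => mem_stabilizer_iff))
  have hfix : ∀ a : A, Nat.card (fixedBy X a)
      = (Finset.univ.filter (fun y : X => a • y = y)).card := by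
    intro a
    rw [Nat.card_eq_fintype_card, ← Fintype.card_subtype]
    exact Fintype.card_congr (Equiv.subtypeEquivRight (fun y => MulAction.mem_fixedBy))
  have hdouble : ∑ y : X, Nat.card (stabilizer A y) = ∑ a : A, Nat.card (fixedBy X a) := by
    simp_rw [hstab, hfix, Finset.card_filter]
    exact Finset.sum_comm
  have hsplit : ∑ a ∈ Finset.univ.erase (1 : A), Nat.card (fixedBy X a)
      + Nat.card (fixedBy X (1 : A)) = ∑ a : A, Nat.card (fixedBy X a) :=
    Finset.sum_erase_add _ _ (Finset.mem_univ 1)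
  have hone : Nat.card (fixedBy X (1 : A)) = Nat.card X := by
    have huniv : fixedBy X (1 : A) = Set.univ := by
      ext y; simp [MulAction.mem_fixedBy]
    rw [huniv]
    exact Nat.card_congr (Equiv.Set.univ X)
  have h2 : Nat.card A ∣ ∑ a ∈ Finset.univ.erase (1 : A), Nat.card (fixedBy X a) := by
    have key := card_dvd_sum (A := ConjAct A) (X := A)
      (fun a => Nat.card (fixedBy X a)) ?_ (Finset.univ.erase 1) ?_ ?_
    · calc Nat.card A = Nat.card (ConjAct A) := Nat.card_congr ConjAct.toConjAct.toEquiv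
        _ ∣ _ := key
    · -- invariance
      intro g a
      simp only [ConjAct.smul_def]
      set c := ConjAct.ofConjAct g with hc
      refine (Nat.card_congr (Equiv.subtypeEquiv (MulAction.toPerm c) (fun y => ?_))).symm
      simp only [MulAction.mem_fixedBy, MulAction.toPerm_apply]
      constructor
      · intro hy
        rw [smul_smul, inv_mul_cancel_right, mul_smul, hy]
      · intro hy
        have : (c * a * c⁻¹) • c • y = c • (a • y) := by
          rw [smul_smul, inv_mul_cancel_right, mul_smul]
        rw [this] at hy
        exact smul_left_cancel c hy
    · -- T invariant
      intro g a ha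
      rw [Finset.mem_erase] at ha ⊢
      refine ⟨?_, Finset.mem_univ _⟩
      intro hone'
      apply ha.1
      rw [ConjAct.smul_def] at hone'
      have : a = (ConjAct.ofConjAct g)⁻¹ * (ConjAct.ofConjAct g * a * (ConjAct.ofConjAct g)⁻¹)
          * ConjAct.ofConjAct g := by group
      rw [hone'] at this
      simpa using this
    · -- stabilizer divides
      intro a ha
      rw [Finset.mem_erase] at ha
      have hcent : Nat.card (stabilizer (ConjAct A) a)
          = Nat.card (centralizer ({a} : Set A) : Subgroup A) := by
        refine Nat.card_congr (Equiv.subtypeEquiv ConjAct.ofConjAct.toEquiv (fun g => ?_))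
        rw [mem_stabilizer_iff, ConjAct.smul_def, Subgroup.mem_centralizer_singleton_iff]
        simp only [MulEquiv.toEquiv_eq_coe, EquivLike.coe_coe]
        exact mul_inv_eq_iff_eq_mul
      rw [hcent]
      exact h a ha.1
  have htot : Nat.card A ∣ ∑ a ∈ Finset.univ.erase (1 : A), Nat.card (fixedBy X a)
      + Nat.card X := by
    rw [← hone, hsplit, ← hdouble]
    exact h1
  exact (Nat.dvd_add_right h2).mp htot


universe u

theorem sol_main : ∀ (n : ℕ) (G : Type u) [Group G] [Finite G] (x : G),
    Nat.card G ≤ n →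
    Nat.card (Subgroup.centralizer {x} : Subgroup G) ∣ Nat.card (Sol x) := by
  intro n
  induction n with
  | zero =>
    intro G _ _ x hle
    have h := Nat.card_pos (α := G)
    omega
  | succ n ih =>
    intro G _ _ x hle
    by_cases hZ : Subgroup.center G = ⊥
    · -- trivial center : Burnside-type argument
      set C := Subgroup.centralizer ({x} : Set G) with hC
      letI act : MulAction ↥C ↥(Sol x) :=
        { smul := fun a y => ⟨a.1 * y.1 * a.1⁻¹,
            sol_conj (Subgroup.mem_centralizer_singleton_iff.mp a.2) y.2⟩
          one_smul := fun y => by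
            apply Subtype.ext
            show (1:G) * y.1 * (1:G)⁻¹ = y.1
            group
          mul_smul := fun a b y => by
            apply Subtype.ext
            show (a.1*b.1) * y.1 * (a.1*b.1)⁻¹ = a.1 * (b.1 * y.1 * b.1⁻¹) * a.1⁻¹
            group }
      apply key_dvd
      intro a ha
      have haval : (a : G) ≠ 1 := fun hv => ha (Subtype.ext hv)
      have hax : (a : G) * x = x * (a : G) := Subgroup.mem_centralizer_singleton_iff.mp a.2
      set L := Subgroup.centralizer ({(a : G)} : Set G) with hLdef
      have hxL : x ∈ L := Subgroup.mem_centralizer_singleton_iff.mpr hax.symm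
      have hLne : L ≠ ⊤ := by
        intro htop
        apply haval
        have hmem : (a : G) ∈ Subgroup.center G := by
          rw [Subgroup.mem_center_iff]
          intro g
          have hg : g ∈ L := htop ▸ Subgroup.mem_top g
          exact Subgroup.mem_centralizer_singleton_iff.mp hg
        rw [hZ] at hmem
        simpa using hmem
      have hLlt : Nat.card ↥L ≤ n := by
        have hdvd := Subgroup.card_subgroup_dvd_card L
        have hle' : Nat.card ↥L ≤ Nat.card G := Nat.le_of_dvd Nat.card_pos hdvd
        have hne : Nat.card ↥L ≠ Nat.card G := fun he => hLne (Subgroup.eq_top_of_card_eq L he)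
        omega
      have ihL := ih ↥L (⟨x, hxL⟩ : ↥L) hLlt
      have e1 : Nat.card (Subgroup.centralizer {(⟨x, hxL⟩ : ↥L)} : Subgroup ↥L)
          = Nat.card (Subgroup.centralizer ({a} : Set ↥C) : Subgroup ↥C) := by
        apply Nat.card_congr
        refine ⟨fun g => ⟨⟨g.1.1, ?_⟩, ?_⟩, fun b => ⟨⟨b.1.1, ?_⟩, ?_⟩, ?_, ?_⟩
        · -- g.1.1 ∈ C
          rw [hC, Subgroup.mem_centralizer_singleton_iff]
          have := Subgroup.mem_centralizer_singleton_iff.mp g.2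
          exact Subtype.ext_iff.mp this
        · -- mem centralizer {a}
          rw [Subgroup.mem_centralizer_singleton_iff]
          apply Subtype.ext
          exact Subgroup.mem_centralizer_singleton_iff.mp g.1.2
        · -- b.1.1 ∈ L
          rw [hLdef, Subgroup.mem_centralizer_singleton_iff]
          have := Subgroup.mem_centralizer_singleton_iff.mp b.2
          exact Subtype.ext_iff.mp this
        · -- mem centralizer {xL}
          rw [Subgroup.mem_centralizer_singleton_iff]
          apply Subtype.ext
          exact Subgroup.mem_centralizer_singleton_iff.mp b.1.2
        · intro g
          apply Subtype.ext; apply Subtype.ext; rfl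
        · intro b
          apply Subtype.ext; apply Subtype.ext; rfl
      have e2 : Nat.card (MulAction.fixedBy ↥(Sol x) a) = Nat.card (Sol (⟨x, hxL⟩ : ↥L)) := by
        apply Nat.card_congr
        refine ⟨fun y => ⟨⟨y.1.1, ?_⟩, ?_⟩, fun z => ⟨⟨z.1.1, ?_⟩, ?_⟩, ?_, ?_⟩
        · -- y.1.1 ∈ L
          have hfix : a.1 * y.1.1 * a.1⁻¹ = y.1.1 := Subtype.ext_iff.mp y.2
          rw [hLdef, Subgroup.mem_centralizer_singleton_iff]
          have : a.1 * y.1.1 = y.1.1 * a.1 := mul_inv_eq_iff_eq_mul.mp hfix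
          exact this.symm
        · -- mem Sol xL
          exact (mem_sol_subgroup hxL _).mpr y.1.2
        · -- z.1.1 ∈ Sol x
          exact (mem_sol_subgroup hxL z.1.2).mp z.2
        · -- fixed
          apply Subtype.ext
          show a.1 * z.1.1 * a.1⁻¹ = z.1.1
          have : z.1.1 * a.1 = a.1 * z.1.1 := Subgroup.mem_centralizer_singleton_iff.mp z.1.2
          rw [mul_inv_eq_iff_eq_mul, this.symm]
        · intro y
          apply Subtype.ext; apply Subtype.ext; rfl
        · intro z
          apply Subtype.ext; apply Subtype.ext; rfl
      rw [e2, ← e1]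
      exact ihL
    · -- nontrivial center : pass to the quotient
      set Z := Subgroup.center G with hZdef
      have hZle : Z ≤ Subgroup.centralizer ({x} : Set G) := Subgroup.center_le_centralizer {x}
      set π := QuotientGroup.mk' Z with hπ
      have hπsur : Function.Surjective π := QuotientGroup.mk'_surjective Z
      have hpre : Sol x = π ⁻¹' (Sol (π x)) := by
        ext y
        simp only [Set.mem_preimage]
        rw [mem_sol_iff, mem_sol_iff]
        constructor
        · intro hy
          have hmap : Subgroup.closure {π x, π y} = (Subgroup.closure {x, y}).map π := by
            rw [MonoidHom.map_closure, Set.image_pair]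
          rw [hmap]
          haveI : Group.IsSolvable ↥(Subgroup.closure ({x, y} : Set G)) := hy
          exact solvable_of_surjective (MonoidHom.subgroupMap_surjective π _)
        · intro hy
          set H := Subgroup.closure ({x, y} : Set G) with hH
          set φ := π.comp H.subtype with hφ
          have hker : φ.ker = Z.subgroupOf H := by
            ext g
            simp only [hφ, MonoidHom.mem_ker, MonoidHom.comp_apply, Subgroup.coe_subtype,
              Subgroup.mem_subgroupOf, hπ, QuotientGroup.mk'_apply, QuotientGroup.eq_one_iff]
          haveI hKsolv : Group.IsSolvable ↥(Z.subgroupOf H) := by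
            apply isSolvable_of_comm
            intro p q
            apply Subtype.ext
            apply Subtype.ext
            have hp : ((p.1 : G)) ∈ Subgroup.center G := p.2
            exact (Subgroup.mem_center_iff.mp hp (q.1 : G)).symm
          haveI hRsolv : Group.IsSolvable ↥φ.range := by
            have hrange : φ.range = Subgroup.closure {π x, π y} := by
              rw [hφ, MonoidHom.range_comp, Subgroup.range_subtype, hH,
                MonoidHom.map_closure, Set.image_pair]
            rw [hrange]
            exact hy
          exact solvable_of_ker_le_range (Z.subgroupOf H).subtype φ.rangeRestrict
            (by rw [MonoidHom.ker_rangeRestrict, hker, Subgroup.range_subtype])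
      have hcardSol : Nat.card (Sol x) = Nat.card Z * Nat.card (Sol (π x)) := by
        rw [hpre, card_preimage_hom π hπsur (Sol (π x))]
        congr 2
        rw [hπ, QuotientGroup.ker_mk']
      have hZcard : 2 ≤ Nat.card Z := by
        have h1 := (Subgroup.one_lt_card_iff_ne_bot (H := Z)).mpr hZ
        omega
      have hGquot : Nat.card (G ⧸ Z) ≤ n := by
        have hG : Nat.card G = Nat.card (G ⧸ Z) * Nat.card Z :=
          Subgroup.card_eq_card_quotient_mul_card_subgroup Z
        have hpos : 0 < Nat.card (G ⧸ Z) := Nat.card_pos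
        have h2 : Nat.card (G ⧸ Z) * 2 ≤ Nat.card G := by
          rw [hG]
          exact Nat.mul_le_mul_left _ hZcard
        omega
      have ihq := ih (G ⧸ Z) (π x) hGquot
      set C := Subgroup.centralizer ({x} : Set G) with hC
      set ψ := π.comp C.subtype with hψ
      have hkerψ : ψ.ker = Z.subgroupOf C := by
        ext c
        simp only [hψ, MonoidHom.mem_ker, MonoidHom.comp_apply, Subgroup.coe_subtype,
          Subgroup.mem_subgroupOf, hπ, QuotientGroup.mk'_apply, QuotientGroup.eq_one_iff]
      have hcardC : Nat.card C = Nat.card ψ.range * Nat.card Z := by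
        have h1 : Nat.card ↥C = Nat.card (↥C ⧸ ψ.ker) * Nat.card ψ.ker :=
          Subgroup.card_eq_card_quotient_mul_card_subgroup _
        have h2 : Nat.card (↥C ⧸ ψ.ker) = Nat.card ψ.range :=
          Nat.card_congr (QuotientGroup.quotientKerEquivRange ψ).toEquiv
        have h3 : Nat.card ψ.ker = Nat.card Z := by
          rw [hkerψ]
          exact Nat.card_congr (Subgroup.subgroupOfEquivOfLe hZle).toEquiv
        rw [h1, h2, h3]
      have hrange : ψ.range ≤ Subgroup.centralizer {π x} := by
        rintro q ⟨c, rfl⟩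
        rw [Subgroup.mem_centralizer_singleton_iff]
        have hc : (c : G) * x = x * (c : G) := Subgroup.mem_centralizer_singleton_iff.mp c.2
        show ψ c * π x = π x * ψ c
        simp only [hψ, MonoidHom.comp_apply, Subgroup.coe_subtype, ← map_mul]
        rw [hc]
      calc Nat.card C = Nat.card ψ.range * Nat.card Z := hcardC
        _ ∣ Nat.card (Subgroup.centralizer {π x} : Subgroup (G ⧸ Z)) * Nat.card Z :=
            mul_dvd_mul_right (Subgroup.card_dvd_of_le hrange) _
        _ ∣ Nat.card (Sol (π x)) * Nat.card Z := mul_dvd_mul_right ihq _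
        _ = Nat.card (Sol x) := by rw [hcardSol, mul_comm]

theorem stmt3 {G : Type*} [Group G] [Finite G] (x : G) :
    Nat.card (Subgroup.centralizer {x} : Subgroup G) ∣ Nat.card (Sol x) :=
  sol_main (Nat.card G) G x le_rfl
end

section
/- Let G be a finite group, N a solvable normal subgroup of G, and x ∈ G. Then Sol_G(x) is a union of cosets of N, and the image of Sol_G(x) in G/N equals Sol_{G/N}(xN); in particular |Sol_{G/N}(xN)| = |Sol_G(x)|/|N|. -/
open Subgroup QuotientGroup

lemma closure_pair_map {G : Type*} [Group G] (N : Subgroup G) [N.Normal] (x y : G) :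
    (Subgroup.closure {x, y}).map (QuotientGroup.mk' N) =
      Subgroup.closure {(QuotientGroup.mk x : G ⧸ N), QuotientGroup.mk y} := by
  rw [MonoidHom.map_closure, Set.image_pair]
  rfl

lemma sol_iff {G : Type*} [Group G] (N : Subgroup G) [N.Normal]
    (hN : IsSolvable N) (x y : G) :
    y ∈ Sol x ↔ (QuotientGroup.mk y : G ⧸ N) ∈ Sol (QuotientGroup.mk x : G ⧸ N) := by
  constructor
  · intro h
    haveI : Group.IsSolvable (Subgroup.closure {x, y}) := h
    have : IsSolvable ((Subgroup.closure {x, y}).map (QuotientGroup.mk' N)) :=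
      solvable_of_surjective ((QuotientGroup.mk' N).subgroupMap_surjective _)
    rwa [closure_pair_map] at this
  · intro h
    set H := Subgroup.closure {x, y} with hH
    set φ : H →* G ⧸ N := (QuotientGroup.mk' N).comp H.subtype with hφ
    have hrange : φ.range = Subgroup.closure {(QuotientGroup.mk x : G ⧸ N), QuotientGroup.mk y} := by
      rw [hφ, MonoidHom.range_comp, Subgroup.range_subtype, closure_pair_map]
    have hsolrange : Group.IsSolvable φ.range := by rw [hrange]; exact h
    have hsolker : Group.IsSolvable φ.ker := by
      have hmem : ∀ z : φ.ker, (z.1 : G) ∈ N := by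
        intro z
        have := z.2
        simp only [MonoidHom.mem_ker, hφ, MonoidHom.comp_apply] at this
        exact (QuotientGroup.eq_one_iff _).mp this
      let ψ : φ.ker →* N :=
        { toFun := fun z => ⟨(z.1 : G), hmem z⟩
          map_one' := rfl
          map_mul' := fun _ _ => rfl }
      have hinj : Function.Injective ψ := by
        intro a b hab
        have : (a.1 : G) = (b.1 : G) := congrArg (fun z : N => (z : G)) hab
        exact Subtype.ext (Subtype.ext this)
      haveI : Group.IsSolvable N := hN
      exact solvable_of_solvable_injective hinj
    exact solvable_of_ker_le_range φ.ker.subtype φ.rangeRestrict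
      (by rw [MonoidHom.ker_rangeRestrict, Subgroup.range_subtype])

theorem stmt4 {G : Type*} [Group G] [Finite G] (N : Subgroup G) [N.Normal]
    (hN : IsSolvable N) (x : G) :
    (∀ y ∈ Sol x, ∀ n ∈ N, y * n ∈ Sol x) ∧
    (QuotientGroup.mk '' Sol x = Sol (QuotientGroup.mk x : G ⧸ N)) ∧
    Nat.card (Sol (QuotientGroup.mk x : G ⧸ N)) = Nat.card (Sol x) / Nat.card N := by
  have key : ∀ y : G, y ∈ Sol x ↔
      (QuotientGroup.mk y : G ⧸ N) ∈ Sol (QuotientGroup.mk x : G ⧸ N) :=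
    sol_iff N hN x
  have himg : QuotientGroup.mk '' Sol x = Sol (QuotientGroup.mk x : G ⧸ N) := by
    ext q
    constructor
    · rintro ⟨y, hy, rfl⟩
      exact (key y).mp hy
    · intro hq
      obtain ⟨y, rfl⟩ := QuotientGroup.mk_surjective q
      exact ⟨y, (key y).mpr hq, rfl⟩
  refine ⟨?_, himg, ?_⟩
  · intro y hy n hn
    rw [key] at hy ⊢
    have : (QuotientGroup.mk (y * n) : G ⧸ N) = QuotientGroup.mk y := by
      rw [QuotientGroup.mk_mul, (QuotientGroup.eq_one_iff n).mpr hn, mul_one]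
    rwa [this]
  · have hpre : Sol x = QuotientGroup.mk ⁻¹' Sol (QuotientGroup.mk x : G ⧸ N) := by
      ext y; exact key y
    have hcard : Nat.card (Sol x) =
        Nat.card N * Nat.card (Sol (QuotientGroup.mk x : G ⧸ N)) := by
      rw [hpre, Nat.card_congr (QuotientGroup.preimageMkEquivSubgroupProdSet N _),
        Nat.card_prod]
    rw [hcard, Nat.mul_div_cancel_left _ Nat.card_pos]
end

section
/- Let G be a finite group, x ∈ G, and k ≥ 2 an integer. If every left-normed commutator [u_1, u_2, ..., u_k] of weight k with all entries in Sol_G(x) is trivial, then Sol_G(x) is a subgroup of G, and it is nilpotent of class at most k−1. -/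
open scoped commutatorElement in
/-- Left-normed long commutator: `listComm [x₁, ..., xₖ] = [x₁, x₂, ..., xₖ]`. -/
def listComm {G : Type*} [Group G] : List G → G
  | [] => 1
  | a :: l => l.foldl (fun u v => ⁅u, v⁆) a

open scoped commutatorElement

section Aux

variable {G : Type*} [Group G]

lemma listComm_append_singleton (a : G) (t : List G) (v : G) :
    listComm (a :: (t ++ [v])) = ⁅listComm (a :: t), v⁆ := by
  simp [listComm, List.foldl_append]

lemma foldl_comm_mem (H : Subgroup G) :
    ∀ (t : List G) (a : G), a ∈ H → (∀ u ∈ t, u ∈ H) →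
      t.foldl (fun u v => ⁅u, v⁆) a ∈ H
  | [], a, ha, _ => ha
  | b :: t, a, ha, ht => by
    refine foldl_comm_mem H t ⁅a, b⁆ ?_ (fun u hu => ht u (List.mem_cons_of_mem _ hu))
    have hb : b ∈ H := ht b List.mem_cons_self
    rw [commutatorElement_def]
    exact H.mul_mem (H.mul_mem (H.mul_mem ha hb) (H.inv_mem ha)) (H.inv_mem hb)

end Aux

theorem stmt6 {G : Type*} [Group G] [Finite G] (x : G) (k : ℕ) (hk : 2 ≤ k)
    (h : ∀ l : List G, l.length = k → (∀ u ∈ l, u ∈ Sol x) → listComm l = 1) :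
    ∃ H : Subgroup G, (H : Set G) = Sol x ∧ Group.IsNilpotent H ∧
      lowerCentralSeries H (k - 1) = ⊥ := by
  set S := Sol x with hS
  set H : Subgroup G := Subgroup.closure S with hH
  -- image of the upper central series of H in G
  set U : ℕ → Subgroup G := fun j => (upperCentralSeries ↥H j).map H.subtype with hU
  have hconj : ∀ (j : ℕ) (v u : G), v ∈ H → u ∈ U j → v * u * v⁻¹ ∈ U j := by
    intro j v u hv hu
    obtain ⟨z, hz, rfl⟩ := hu
    exact ⟨⟨v, hv⟩ * z * ⟨v, hv⟩⁻¹,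
      (inferInstance : (Subgroup.upperCentralSeries ↥H j).Normal).conj_mem z hz ⟨v, hv⟩, rfl⟩
  have step : ∀ (j : ℕ) (g : G), g ∈ H → (∀ v ∈ S, ⁅g, v⁆ ∈ U j) → g ∈ U (j + 1) := by
    intro j g hg hcomm
    have key : ∀ v ∈ H, ⁅g, v⁆ ∈ U j := by
      intro v hv
      refine Subgroup.closure_induction (p := fun w _ => ⁅g, w⁆ ∈ U j)
        (fun w hw => hcomm w hw) ?_ ?_ ?_ hv
      · simpa using (U j).one_mem
      · intro a b hamem hbmem pa pb
        have hid : ⁅g, a * b⁆ = ⁅g, a⁆ * (a * ⁅g, b⁆ * a⁻¹) := by group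
        rw [hid]
        exact (U j).mul_mem pa (hconj j a _ hamem pb)
      · intro a hamem pa
        have hid : ⁅g, a⁻¹⁆ = a⁻¹ * ⁅g, a⁆⁻¹ * (a⁻¹)⁻¹ := by group
        rw [hid]
        exact hconj j a⁻¹ _ (H.inv_mem hamem) ((U j).inv_mem pa)
    refine ⟨⟨g, hg⟩, ?_, rfl⟩
    show (⟨g, hg⟩ : ↥H) ∈ Subgroup.upperCentralSeries ↥H (j + 1)
    rw [mem_upperCentralSeries_succ_iff]
    intro y
    obtain ⟨z, hz, hzeq⟩ := key (y : G) y.2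
    have : (⟨g, hg⟩ * y * ⟨g, hg⟩⁻¹ * y⁻¹ : ↥H) = z := by
      apply Subtype.ext
      rw [commutatorElement_def] at hzeq
      simpa using hzeq.symm
    rw [commutatorElement_def, this]; exact hz
  -- main downward induction
  have main : ∀ (i : ℕ) (a : G) (t : List G), a ∈ S → (∀ u ∈ t, u ∈ S) →
      t.length + 1 + i = k → listComm (a :: t) ∈ U i := by
    intro i
    induction i with
    | zero =>
      intro a t ha ht hlen
      have h1 : listComm (a :: t) = 1 := by
        refine h (a :: t) (by simpa using hlen) ?_
        intro u hu
        rcases List.mem_cons.mp hu with rfl | hu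
        · exact ha
        · exact ht u hu
      rw [h1]; exact (U 0).one_mem
    | succ i ih =>
      intro a t ha ht hlen
      have hmemH : listComm (a :: t) ∈ H :=
        foldl_comm_mem H t a (Subgroup.subset_closure ha)
          (fun u hu => Subgroup.subset_closure (ht u hu))
      refine step i _ hmemH ?_
      intro v hv
      rw [← listComm_append_singleton]
      have hmem' : ∀ u ∈ t ++ [v], u ∈ S := by
        intro u hu
        rcases List.mem_append.mp hu with hu | hu
        · exact ht u hu
        · rcases List.mem_singleton.mp hu with rfl
          exact hv
      have hlen' : (t ++ [v]).length + 1 + i = k := by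
        simp only [List.length_append, List.length_cons, List.length_nil]
        omega
      exact ih a (t ++ [v]) ha hmem' hlen'
  have hx : x ∈ S := by
    show IsSolvable ↥(Subgroup.closure {x, x})
    rw [Set.pair_eq_singleton, ← Subgroup.zpowers_eq_closure]
    exact (inferInstance : Group.IsSolvable ↥(Subgroup.zpowers x))
  -- Sol x lands in U (k-1), hence the upper central series reaches the top
  have hSU : S ⊆ ↑(U (k - 1)) := by
    intro u hu
    have := main (k - 1) u [] hu (by simp) (by simp only [List.length_nil]; omega)
    simpa [listComm] using this
  have hHU : H = U (k - 1) := by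
    refine le_antisymm ((Subgroup.closure_le _).mpr hSU) ?_
    exact Subgroup.map_subtype_le _
  have htop : upperCentralSeries ↥H (k - 1) = ⊤ := by
    apply Subgroup.map_injective H.subtype_injective
    have h2 : Subgroup.map H.subtype ⊤ = H :=
      (MonoidHom.range_eq_map H.subtype).symm.trans (Subgroup.range_subtype H)
    refine le_antisymm (Subgroup.map_mono le_top) ?_
    rw [h2]
    exact hHU.le
  haveI hnil : Group.IsNilpotent ↥H := ⟨k - 1, htop⟩
  have hlcs : lowerCentralSeries H (k - 1) = ⊥ :=
    Subgroup.lowerCentralSeries_eq_bot_of_nilpotencyClass_le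
      (upperCentralSeries_eq_top_iff_nilpotencyClass_le.mp htop)
  haveI hsolv : Group.IsSolvable ↥H := inferInstance
  refine ⟨H, ?_, hnil, hlcs⟩
  apply Set.eq_of_subset_of_subset
  · intro y hy
    show IsSolvable ↥(Subgroup.closure {x, y})
    have hle : Subgroup.closure {x, y} ≤ H := by
      rw [Subgroup.closure_le]
      rw [Set.insert_subset_iff, Set.singleton_subset_iff]
      exact ⟨Subgroup.subset_closure hx, hy⟩
    exact solvable_of_solvable_injective (Subgroup.inclusion_injective hle)
  · exact Subgroup.subset_closure
end

section
/- Let G be a finite group and x ∈ G an element of prime order p with P = ⟨x⟩. If |Sol_G(x)| ≤ p², then Sol_G(x) = N_G(P). -/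
open Subgroup in
lemma closure_pair_eq_sup {G : Type*} [Group G] (x y : G) :
    Subgroup.closure {x, y} = Subgroup.zpowers x ⊔ Subgroup.zpowers y := by
  rw [zpowers_eq_closure, zpowers_eq_closure, ← Subgroup.closure_union]
  rfl

open Subgroup in
/-- If the closure of {x,y} normalizes ⟨x⟩, then it is solvable. -/
lemma solvable_of_le_normalizer {G : Type*} [Group G] (x y : G)
    (h : Subgroup.closure {x, y} ≤ Subgroup.normalizer (Subgroup.zpowers x : Set G)) :
    IsSolvable ↥(Subgroup.closure {x, y}) := by
  set K : Subgroup G := Subgroup.closure {x, y} with hK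
  have hxK : x ∈ K := subset_closure (by simp)
  have hyK : y ∈ K := subset_closure (by simp)
  have hPK : zpowers x ≤ K := zpowers_le.mpr hxK
  set P' : Subgroup ↥K := (zpowers x).subgroupOf K with hP'
  haveI hnormal : P'.Normal := by
    constructor
    intro n hn g
    have hg : (g : G) ∈ normalizer (zpowers x : Set G) := h g.2
    have hn' : (n : G) ∈ zpowers x := hn
    have : (g : G) * n * (g : G)⁻¹ ∈ zpowers x := (mem_normalizer_iff.mp hg n).mp hn'
    exact this
  haveI hPsolv : IsSolvable ↥P' := by
    apply isSolvable_of_comm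
    rintro ⟨a, ha⟩ ⟨b, hb⟩
    obtain ⟨m, hm⟩ := ha
    obtain ⟨n, hn⟩ := hb
    have hm' : (a : G) = x ^ m := hm.symm
    have hn' : (b : G) = x ^ n := hn.symm
    ext
    show ((a : G) * b) = (b : G) * a
    rw [hm', hn', ← zpow_add, ← zpow_add, add_comm]
  -- the quotient is generated by the image of y
  set f := QuotientGroup.mk' P' with hf
  have hQ' : zpowers (⟨y, hyK⟩ : ↥K) ⊔ P' = ⊤ := by
    apply Subgroup.map_injective K.subtype_injective
    rw [Subgroup.map_sup, MonoidHom.map_zpowers, hP',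
      Subgroup.subgroupOf_map_subtype, inf_eq_left.mpr hPK]
    have h1 : Subgroup.map K.subtype ⊤ = K := by
      rw [← MonoidHom.range_eq_map, Subgroup.subtype_range]
    have h2 : K.subtype ⟨y, hyK⟩ = y := rfl
    rw [h1, h2, hK, closure_pair_eq_sup, sup_comm]
  have htop : (⊤ : Subgroup (↥K ⧸ P')) = zpowers (f ⟨y, hyK⟩) := by
    rw [← Subgroup.map_top_of_surjective f (QuotientGroup.mk'_surjective P'), ← hQ',
      Subgroup.map_sup, MonoidHom.map_zpowers]
    have : Subgroup.map f P' = ⊥ := by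
      rw [eq_bot_iff]
      rintro q ⟨a, ha, rfl⟩
      simp only [Subgroup.mem_bot]
      rwa [hf, ← MonoidHom.mem_ker, QuotientGroup.ker_mk']
    rw [this, sup_bot_eq]
  haveI hQsolv : IsSolvable (↥K ⧸ P') := by
    apply isSolvable_of_comm
    intro a b
    have ha : a ∈ zpowers (f ⟨y, hyK⟩) := htop ▸ Subgroup.mem_top a
    have hb : b ∈ zpowers (f ⟨y, hyK⟩) := htop ▸ Subgroup.mem_top b
    obtain ⟨m, rfl⟩ := ha
    obtain ⟨n, rfl⟩ := hb
    rw [← zpow_add, ← zpow_add, add_comm]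
  exact solvable_of_ker_le_range P'.subtype f (hG' := hPsolv) (hG'' := hQsolv)
    (by rw [QuotientGroup.ker_mk', Subgroup.range_subtype])

theorem stmt9 {G : Type*} [Group G] [Finite G] (x : G) (p : ℕ) (hp : p.Prime)
    (hx : orderOf x = p) (hcard : Nat.card (Sol x) ≤ p ^ 2) :
    Sol x = (Subgroup.normalizer (Subgroup.zpowers x : Set G) : Set G) := by
  haveI : Fact p.Prime := ⟨hp⟩
  apply Set.eq_of_subset_of_subset
  · -- Sol x ⊆ normalizer
    intro y hy
    have hsolv : IsSolvable ↥(Subgroup.closure {x, y}) := hy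
    set H : Subgroup G := Subgroup.closure {x, y} with hH
    have hxH : x ∈ H := Subgroup.subset_closure (by simp)
    have hyH : y ∈ H := Subgroup.subset_closure (by simp)
    have hPH : Subgroup.zpowers x ≤ H := Subgroup.zpowers_le.mpr hxH
    -- H ⊆ Sol x
    have hsub : (H : Set G) ⊆ Sol x := by
      intro z hz
      have hle : Subgroup.closure {x, z} ≤ H :=
        (Subgroup.closure_le H).mpr (by
          rintro w (rfl | rfl)
          · exact hxH
          · exact hz)
      exact @solvable_of_solvable_injective _ _ _ _ _ (Subgroup.inclusion_injective hle) hsolv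
    have hHcard : Nat.card ↥H ≤ p ^ 2 :=
      le_trans (Nat.card_mono (Set.toFinite _) hsub) hcard
    set Q : Subgroup ↥H := (Subgroup.zpowers x).subgroupOf H with hQ
    have hcardQ : Nat.card ↥Q = p := by
      rw [Nat.card_congr (Subgroup.subgroupOfEquivOfLe hPH).toEquiv,
        Nat.card_zpowers, hx]
    have hpos : 0 < Nat.card ↥H := Nat.card_pos
    have hdvd : p ∣ Nat.card ↥H := hcardQ ▸ Subgroup.card_subgroup_dvd_card Q
    haveI hnormal : Q.Normal := by
      by_cases hpp : p ^ 2 ∣ Nat.card ↥H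
      · have hcard2 : Nat.card ↥H = p ^ 2 :=
          le_antisymm hHcard (Nat.le_of_dvd hpos hpp)
        have hcomm := IsPGroup.commutative_of_card_eq_prime_sq hcard2
        constructor
        intro n hn g
        have : g * n * g⁻¹ = n := by rw [hcomm g n, mul_inv_cancel_right]
        rwa [this]
      · -- Sylow case
        have hQindex : ¬ p ∣ Q.index := by
          intro hdvd'
          apply hpp
          have := Subgroup.card_mul_index Q
          rw [hcardQ] at this
          obtain ⟨c, hc⟩ := hdvd'
          rw [← this, hc, pow_two]
          exact ⟨c, by ring⟩
        have hfact : (Nat.card ↥H).factorization p = 1 := by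
          obtain ⟨m, hm⟩ := hdvd
          have hpm : ¬ p ∣ m := by
            intro hdvd'
            apply hQindex
            have hmi : m = Q.index := by
              have h2 := Subgroup.card_mul_index Q
              rw [hcardQ] at h2
              have : p * m = p * Q.index := by rw [← hm, h2]
              exact Nat.eq_of_mul_eq_mul_left hp.pos this
            rwa [← hmi]
          have hm0 : m ≠ 0 := by
            rintro rfl
            simp [hm] at hpos
          rw [hm, Nat.factorization_mul hp.ne_zero hm0]
          simp [hp.factorization_self, Nat.factorization_eq_zero_of_not_dvd hpm]
        have hscard : Nat.card ↥Q = p ^ (Nat.card ↥H).factorization p := by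
          rw [hfact, pow_one, hcardQ]
        set S : Sylow p ↥H := Sylow.ofCard Q hscard with hS
        have hn1 : Nat.card (Sylow p ↥H) = 1 := by
          have hmod := card_sylow_modEq_one p ↥H
          have hdvdidx : Nat.card (Sylow p ↥H) ∣ S.index := S.card_dvd_index
          have hSidx : (S : Subgroup ↥H).index = Q.index := by
            rw [hS, Sylow.coe_ofCard]
          have hidxlt : Q.index < p := by
            have h2 := Subgroup.card_mul_index Q
            rw [hcardQ] at h2
            by_contra hge
            push_neg at hge
            have : p ^ 2 ≤ Nat.card ↥H := by
              rw [← h2, pow_two]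
              exact Nat.mul_le_mul_left p hge
            have : Nat.card ↥H = p ^ 2 := le_antisymm hHcard this
            apply hQindex
            have : p * Q.index = p * p := by rw [h2, this, pow_two]
            rw [Nat.eq_of_mul_eq_mul_left hp.pos this]
          have hlt : Nat.card (Sylow p ↥H) < p :=
            lt_of_le_of_lt (Nat.le_of_dvd (by
              have := Q.index_ne_zero_of_finite
              omega) (hSidx ▸ hdvdidx)) hidxlt
          have := Nat.ModEq.eq_of_lt_of_lt hmod hlt (hp.one_lt)
          omega
        have hSnormal : Subgroup.normalizer ((S : Subgroup ↥H) : Set ↥H) = ⊤ := by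
          rw [← Subgroup.index_eq_one, Sylow.coe_coe, ← Sylow.card_eq_index_normalizer, hn1]
        have : (S : Subgroup ↥H).Normal := Subgroup.normalizer_eq_top_iff.mp hSnormal
        rwa [hS, Sylow.coe_ofCard] at this
    exact Subgroup.le_normalizer_of_normal_subgroupOf hPH hyH
  · -- normalizer ⊆ Sol x
    intro y hy
    show IsSolvable ↥(Subgroup.closure {x, y})
    apply solvable_of_le_normalizer
    apply (Subgroup.closure_le _).mpr
    rintro w (rfl | rfl)
    · exact Subgroup.le_normalizer (Subgroup.mem_zpowers w)
    · exact hy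
end

section
/- Let G be a finite insoluble group and x ∈ G. Then |Sol_G(x)| ≠ p² for every prime p. -/
open Subgroup Pointwise

section Helpers

variable {G : Type*} [Group G]

lemma isSolvable_of_le' {H K : Subgroup G} [Group.IsSolvable ↥K] (h : H ≤ K) : Group.IsSolvable ↥H :=
  solvable_of_solvable_injective (Subgroup.inclusion_injective h)

lemma solvable_of_isPGroup' {p : ℕ} (hp : p.Prime) {H : Type*} [Group H] [Finite H]
    (h : IsPGroup p H) : Group.IsSolvable H := by
  haveI := Fact.mk hp
  haveI := h.isNilpotent
  infer_instance

instance zpowers_solvable (x : G) : Group.IsSolvable ↥(Subgroup.zpowers x) := by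
  apply isSolvable_of_comm
  rintro ⟨a, ha⟩ ⟨b, hb⟩
  obtain ⟨i, rfl⟩ := Subgroup.mem_zpowers_iff.mp ha
  obtain ⟨j, rfl⟩ := Subgroup.mem_zpowers_iff.mp hb
  exact Subtype.ext (zpow_mul_comm x i j)

/-- The key workhorse: if `A` is a solvable subgroup, `x ∈ A` and `n` normalizes `A`,
then `⟨x, n⟩` is solvable. -/
lemma solvable_closure_of_mem_normalizer (A : Subgroup G) [hA : Group.IsSolvable ↥A]
    {x n : G} (hx : x ∈ A) (hn : n ∈ Subgroup.normalizer (A : Set G)) :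
    Group.IsSolvable ↥(Subgroup.closure {x, n}) := by
  set M := Subgroup.closure {x, n} with hMdef
  have hxM : x ∈ M := Subgroup.subset_closure (by simp)
  have hnM : n ∈ M := Subgroup.subset_closure (by simp)
  have hMN : M ≤ Subgroup.normalizer (A : Set G) := by
    rw [hMdef, Subgroup.closure_le]
    intro y hy
    rcases hy with rfl | rfl
    · exact Subgroup.le_normalizer hx
    · exact hn
  set K := A.subgroupOf M with hKdef
  haveI hKnormal : K.Normal := by
    constructor
    intro a ha m
    have hm : (m : G) ∈ Subgroup.normalizer (A : Set G) := hMN m.2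
    rw [hKdef, Subgroup.mem_subgroupOf] at ha ⊢
    have := (Subgroup.mem_normalizer_iff.mp hm (a : G)).mp ha
    simpa using this
  haveI hKsolv : Group.IsSolvable ↥K := by
    have hKeq : K = (A ⊓ M).subgroupOf M := by
      ext g
      simp [hKdef, Subgroup.mem_subgroupOf]
    haveI : Group.IsSolvable ↥(A ⊓ M) := isSolvable_of_le' inf_le_left
    rw [hKeq]
    exact solvable_of_solvable_injective
      (f := (Subgroup.subgroupOfEquivOfLe (inf_le_right : A ⊓ M ≤ M)).toMonoidHom)
      (Subgroup.subgroupOfEquivOfLe (inf_le_right : A ⊓ M ≤ M)).injective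
  haveI hq : Group.IsSolvable (↥M ⧸ K) := by
    set c : ↥M ⧸ K := QuotientGroup.mk (⟨n, hnM⟩ : M) with hc
    have key : ∀ z : ↥M ⧸ K, z ∈ Subgroup.zpowers c := by
      intro z
      obtain ⟨m, rfl⟩ := QuotientGroup.mk_surjective z
      obtain ⟨g, hg⟩ := m
      induction hg using Subgroup.closure_induction with
      | mem g hgmem =>
        rcases hgmem with rfl | rfl
        · have : QuotientGroup.mk (⟨g, hxM⟩ : M) = (1 : ↥M ⧸ K) := by
            rw [QuotientGroup.eq_one_iff]
            exact Subgroup.mem_subgroupOf.mpr hx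
          rw [this]; exact one_mem _
        · exact Subgroup.mem_zpowers _
      | one => exact one_mem _
      | mul a b ha hb iha ihb =>
        have : (⟨a * b, mul_mem ha hb⟩ : M) = ⟨a, ha⟩ * ⟨b, hb⟩ := rfl
        rw [this, QuotientGroup.mk_mul]
        exact mul_mem iha ihb
      | inv a ha iha =>
        have : (⟨a⁻¹, inv_mem ha⟩ : M) = (⟨a, ha⟩ : M)⁻¹ := rfl
        rw [this, QuotientGroup.mk_inv]
        exact inv_mem iha
    apply isSolvable_of_comm
    intro a b
    obtain ⟨i, rfl⟩ := Subgroup.mem_zpowers_iff.mp (key a)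
    obtain ⟨j, rfl⟩ := Subgroup.mem_zpowers_iff.mp (key b)
    exact zpow_mul_comm c i j
  exact solvable_of_ker_le_range K.subtype (QuotientGroup.mk' K)
    (by rw [QuotientGroup.ker_mk', Subgroup.range_subtype])

lemma subgroup_subset_sol {H : Subgroup G} [Group.IsSolvable ↥H] {x : G} (hx : x ∈ H) :
    (H : Set G) ⊆ Sol x := by
  intro y hy
  have hle : Subgroup.closure {x, y} ≤ H := by
    rw [Subgroup.closure_le]
    rintro z (rfl | rfl)
    exacts [hx, hy]
  exact isSolvable_of_le' hle

lemma sol_mul_zpowers {x s : G} (hs : s ∈ Sol x) {h : G} (hh : h ∈ Subgroup.zpowers x) :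
    s * h ∈ Sol x := by
  haveI : Group.IsSolvable ↥(Subgroup.closure {x, s}) := hs
  have hle : Subgroup.closure {x, s * h} ≤ Subgroup.closure {x, s} := by
    rw [Subgroup.closure_le]
    rintro z (rfl | rfl)
    · exact Subgroup.subset_closure (by simp)
    · exact mul_mem (Subgroup.subset_closure (by simp))
        (Subgroup.zpowers_le.mpr (Subgroup.subset_closure (by simp)) hh)
  exact isSolvable_of_le' hle

lemma orderOf_dvd_card_sol [Finite G] (x : G) : orderOf x ∣ Nat.card (Sol x) := by
  classical
  set H := Subgroup.zpowers x with hH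
  set T := (QuotientGroup.mk : G → G ⧸ H) '' (Sol x) with hT
  have hpre : (QuotientGroup.mk : G → G ⧸ H) ⁻¹' T = Sol x := by
    ext y
    constructor
    · rintro ⟨s, hs, heq⟩
      have hsy : s⁻¹ * y ∈ H := (QuotientGroup.eq).mp heq
      have := sol_mul_zpowers hs hsy
      simpa using this
    · intro hy
      exact ⟨y, hy, rfl⟩
  have hcard : Nat.card (Sol x) = Nat.card H * Nat.card T := by
    rw [← hpre, Nat.card_congr (QuotientGroup.preimageMkEquivSubgroupProdSet H T),
      Nat.card_prod]
  rw [hcard, ← Nat.card_zpowers]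
  exact Dvd.intro _ rfl

lemma sol_conj_mem {x y : G} (g : G) (h : y ∈ Sol x) : g * y * g⁻¹ ∈ Sol (g * x * g⁻¹) := by
  haveI : Group.IsSolvable ↥(Subgroup.closure {x, y}) := h
  have hmap : Subgroup.closure {g * x * g⁻¹, g * y * g⁻¹}
      = (Subgroup.closure {x, y}).map (MulAut.conj g).toMonoidHom := by
    rw [MonoidHom.map_closure, Set.image_pair]
    simp [MulAut.conj_apply]
  show Group.IsSolvable ↥(Subgroup.closure {g * x * g⁻¹, g * y * g⁻¹})
  rw [hmap]
  exact solvable_of_solvable_injective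
    (f := (Subgroup.equivMapOfInjective _ _ (MulAut.conj g).injective).symm.toMonoidHom)
    (MulEquiv.injective _)

lemma sol_conj_s10 (g x : G) : Sol (g * x * g⁻¹) = ⇑(MulAut.conj g) '' Sol x := by
  ext y
  constructor
  · intro hy
    refine ⟨g⁻¹ * y * g, ?_, by simp [MulAut.conj_apply]; group⟩
    have h1 := sol_conj_mem g⁻¹ hy
    have h2 : g⁻¹ * (g * x * g⁻¹) * g⁻¹⁻¹ = x := by group
    have h3 : g⁻¹ * y * g⁻¹⁻¹ = g⁻¹ * y * g := by group
    rwa [h2, h3] at h1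
  · rintro ⟨s, hs, rfl⟩
    have := sol_conj_mem g hs
    simpa [MulAut.conj_apply] using this

lemma card_sol_conj (g x : G) : Nat.card (Sol (g * x * g⁻¹)) = Nat.card (Sol x) := by
  rw [sol_conj_s10, Nat.card_image_of_injective (MulAut.conj g).injective]

end Helpers

theorem stmt10 {G : Type*} [Group G] [Finite G] (hG : ¬ IsSolvable G) (x : G) :
    ∀ p : ℕ, p.Prime → Nat.card (Sol x) ≠ p ^ 2 := by
  intro p hp hcard
  haveI := Fact.mk hp
  have hGcard0 : Nat.card G ≠ 0 := Nat.card_pos.ne'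
  have hsmall : Nat.card G = p ^ 2 → False := fun h =>
    hG (solvable_of_isPGroup' hp (IsPGroup.of_card h))
  by_cases hx1 : x = 1
  · -- x = 1 : Sol x = univ
    subst hx1
    have huniv : Sol (1 : G) = Set.univ := by
      ext y
      simp only [Set.mem_univ, iff_true]
      show Group.IsSolvable ↥(Subgroup.closure {(1 : G), y})
      have hle : Subgroup.closure {(1 : G), y} ≤ Subgroup.zpowers y := by
        rw [Subgroup.closure_le]
        rintro z (rfl | rfl)
        exacts [one_mem _, Subgroup.mem_zpowers _]
      exact isSolvable_of_le' hle
    apply hsmall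
    rw [← hcard, huniv]
    exact (Nat.card_congr (Equiv.Set.univ G)).symm ▸ rfl
  · -- x ≠ 1
    have hdvd : orderOf x ∣ p ^ 2 := hcard ▸ orderOf_dvd_card_sol x
    obtain ⟨k, hk2, hk⟩ := (Nat.dvd_prime_pow hp).mp hdvd
    have hk0 : k ≠ 0 := by
      rintro rfl
      exact hx1 (orderOf_eq_one_iff.mp (by simpa using hk))
    have hxpg : IsPGroup p ↥(Subgroup.zpowers x) :=
      IsPGroup.of_card (by rw [Nat.card_zpowers, hk])
    obtain ⟨P, hxP⟩ := hxpg.exists_le_sylow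
    haveI hPsolv : Group.IsSolvable ↥(P : Subgroup G) := solvable_of_isPGroup' hp P.isPGroup'
    have hxmemP : x ∈ (P : Subgroup G) := hxP (Subgroup.mem_zpowers x)
    have hPsub : ((P : Subgroup G) : Set G) ⊆ Sol x := subgroup_subset_sol hxmemP
    have hPle : Nat.card ↥(P : Subgroup G) ≤ p ^ 2 := by
      rw [← hcard]
      exact Nat.card_mono (Set.toFinite _) hPsub
    have hcardP := P.card_eq_multiplicity
    set n := (Nat.card G).factorization p with hn
    have hple : p ^ n ≤ p ^ 2 := by rw [← hcardP]; exact hPle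
    have hn2 : n ≤ 2 := (Nat.pow_le_pow_iff_right hp.one_lt).mp hple
    have hn1 : 1 ≤ n := by
      have h1 : p ∣ p ^ n := by
        rw [← hcardP]
        have h2 : orderOf x ∣ Nat.card ↥(P : Subgroup G) := by
          simpa using orderOf_dvd_natCard (⟨x, hxmemP⟩ : ↥(P : Subgroup G))
        exact dvd_trans (by rw [hk]; exact dvd_pow_self p hk0) h2
      rcases Nat.eq_zero_or_pos n with h0 | hpos
      · rw [h0, pow_zero] at h1
        exact absurd (Nat.dvd_one.mp h1) hp.ne_one
      · exact hpos
    have hncase : n = 1 ∨ n = 2 := by omega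
    rcases hncase with hn1eq | hn2eq
    · -- Case ν_p(|G|) = 1
      have hcardP1 : Nat.card ↥(P : Subgroup G) = p := by rw [hcardP, hn1eq, pow_one]
      have hxord : orderOf x = p := by
        have h2 : orderOf x ∣ Nat.card ↥(P : Subgroup G) := by
          simpa using orderOf_dvd_natCard (⟨x, hxmemP⟩ : ↥(P : Subgroup G))
        rw [hcardP1] at h2
        rcases (Nat.dvd_prime hp).mp h2 with h | h
        · exact absurd (orderOf_eq_one_iff.mp h) hx1
        · exact h
      set N := Subgroup.normalizer (Subgroup.zpowers x : Set G) with hNdef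
      have hsub : Sol x ⊆ (N : Set G) := by
        intro y hy
        haveI hMsolv : Group.IsSolvable ↥(Subgroup.closure {x, y}) := hy
        set M := Subgroup.closure {x, y} with hMdef
        have hxM : x ∈ M := Subgroup.subset_closure (by simp)
        have hyM : y ∈ M := Subgroup.subset_closure (by simp)
        have hMsub : (M : Set G) ⊆ Sol x := subgroup_subset_sol hxM
        have hMle : Nat.card ↥M ≤ p ^ 2 := by
          rw [← hcard]; exact Nat.card_mono (Set.toFinite _) hMsub
        have hcardM0 : Nat.card ↥M ≠ 0 := Nat.card_pos.ne'
        have hpM : p ∣ Nat.card ↥M := by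
          have := orderOf_dvd_natCard (⟨x, hxM⟩ : ↥M)
          simpa [hxord] using this
        have hfacM : (Nat.card ↥M).factorization p = 1 := by
          apply le_antisymm
          · have hdvdG : Nat.card ↥M ∣ Nat.card G := Subgroup.card_subgroup_dvd_card M
            have := (Nat.factorization_le_iff_dvd hcardM0 hGcard0).mpr hdvdG p
            omega
          · rw [← Nat.Prime.pow_dvd_iff_le_factorization hp hcardM0, pow_one]
            exact hpM
        set x' : ↥M := ⟨x, hxM⟩ with hx'def
        have hx'ord : orderOf x' = p := by
          have := orderOf_injective M.subtype M.subtype_injective x'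
          exact this.symm.trans hxord
        have hx'pg : IsPGroup p ↥(Subgroup.zpowers x') :=
          IsPGroup.of_card (by rw [Nat.card_zpowers, hx'ord, pow_one])
        obtain ⟨R, hxR⟩ := hx'pg.exists_le_sylow
        have hcardR : Nat.card ↥(R : Subgroup ↥M) = p := by
          rw [R.card_eq_multiplicity, hfacM, pow_one]
        have hzR : Subgroup.zpowers x' = (R : Subgroup ↥M) := by
          apply Subgroup.eq_of_le_of_card_ge hxR
          rw [hcardR, Nat.card_zpowers, hx'ord]
        have hc1 : Nat.card (Sylow p ↥M) ≡ 1 [MOD p] := card_sylow_modEq_one p ↥M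
        have hcdvd : Nat.card (Sylow p ↥M) ∣ (R : Subgroup ↥M).index := R.card_dvd_index
        have hRindmul := Subgroup.card_mul_index (R : Subgroup ↥M)
        have hindne : (R : Subgroup ↥M).index ≠ 0 := Subgroup.index_ne_zero_of_finite
        have hindex : (R : Subgroup ↥M).index ≤ p := by
          rw [hcardR] at hRindmul
          nlinarith [hp.pos]
        have hcle : Nat.card (Sylow p ↥M) ≤ p :=
          le_trans (Nat.le_of_dvd (Nat.pos_of_ne_zero hindne) hcdvd) hindex
        have hceq1 : Nat.card (Sylow p ↥M) = 1 := by
          have h2 : Nat.card (Sylow p ↥M) % p = 1 % p := hc1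
          rcases lt_or_eq_of_le hcle with hlt | heq
          · rwa [Nat.mod_eq_of_lt hlt, Nat.mod_eq_of_lt hp.one_lt] at h2
          · rw [heq, Nat.mod_self, Nat.mod_eq_of_lt hp.one_lt] at h2
            omega
        haveI hss : Subsingleton (Sylow p ↥M) := (Nat.card_eq_one_iff_unique.mp hceq1).1
        set y' : ↥M := ⟨y, hyM⟩ with hy'def
        have hyn : y' ∈ Subgroup.normalizer ((R : Subgroup ↥M) : Set ↥M) :=
          Sylow.smul_eq_iff_mem_normalizer.mp (Subsingleton.elim _ _)
        rw [← hzR] at hyn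
        show y ∈ N
        rw [hNdef, Subgroup.mem_normalizer_iff]
        intro h
        constructor
        · intro hh
          obtain ⟨m, hm⟩ := Subgroup.mem_zpowers_iff.mp hh
          have hmem : (x' ^ m : ↥M) ∈ Subgroup.zpowers x' := zpow_mem (Subgroup.mem_zpowers x') m
          have h2 := (Subgroup.mem_normalizer_iff.mp hyn (x' ^ m)).mp hmem
          have h3 : y * h * y⁻¹ ∈ (Subgroup.zpowers x').map M.subtype := by
            refine ⟨y' * x' ^ m * y'⁻¹, h2, ?_⟩
            simp [hy'def, hx'def, ← hm]
          rwa [MonoidHom.map_zpowers] at h3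
        · intro hh
          obtain ⟨m, hm⟩ := Subgroup.mem_zpowers_iff.mp hh
          have hmem : (x' ^ m : ↥M) ∈ Subgroup.zpowers x' := zpow_mem (Subgroup.mem_zpowers x') m
          have h2 := (Subgroup.mem_normalizer_iff.mp (inv_mem hyn) (x' ^ m)).mp hmem
          have h3 : y⁻¹ * (x ^ m) * y ∈ (Subgroup.zpowers x').map M.subtype := by
            refine ⟨y'⁻¹ * x' ^ m * y'⁻¹⁻¹, h2, ?_⟩
            simp [hy'def, hx'def]
          rw [MonoidHom.map_zpowers] at h3
          have h4 : h = y⁻¹ * (x ^ m) * y := by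
            have : (x : G) ^ m = y * h * y⁻¹ := by exact_mod_cast hm
            rw [this]; group
          rwa [h4]
      have hNsub : (N : Set G) ⊆ Sol x := fun nn hnn =>
        solvable_closure_of_mem_normalizer (Subgroup.zpowers x) (Subgroup.mem_zpowers x) hnn
      have hNeq : (N : Set G) = Sol x := Set.Subset.antisymm hNsub hsub
      have hcardN : Nat.card ↥N = p ^ 2 := by
        rw [← hcard]
        exact Nat.card_congr (Equiv.setCongr hNeq)
      have hdvd2 : p ^ 2 ∣ Nat.card G := hcardN ▸ Subgroup.card_subgroup_dvd_card N
      have := (hp.pow_dvd_iff_le_factorization hGcard0).mp hdvd2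
      omega
    · -- Case ν_p(|G|) = 2
      have hcardP2 : Nat.card ↥(P : Subgroup G) = p ^ 2 := by rw [hcardP, hn2eq]
      have hSolP : ((P : Subgroup G) : Set G) = Sol x := by
        apply Set.Finite.eq_of_subset_of_card_le (Set.toFinite _) hPsub
        rw [hcard]
        exact le_of_eq hcardP2.symm
      have hnorm : Subgroup.normalizer ((P : Subgroup G) : Set G) ≤ (P : Subgroup G) := by
        intro nn hnn
        have hmem : nn ∈ Sol x := solvable_closure_of_mem_normalizer _ hxmemP hnn
        rwa [← hSolP] at hmem
      have hcomm : ∀ a b : ↥(P : Subgroup G), a * b = b * a :=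
        IsPGroup.commutative_of_card_eq_prime_sq hcardP2
      have hnc : Subgroup.normalizer ((P : Subgroup G) : Set G) ≤ Subgroup.centralizer (P : Set G) := by
        intro g hg
        have hgP : g ∈ (P : Subgroup G) := hnorm hg
        rw [Subgroup.mem_centralizer_iff]
        intro h hh
        exact congrArg Subtype.val (hcomm ⟨h, hh⟩ ⟨g, hgP⟩)
      set K := (MonoidHom.transferSylow P hnc).ker with hKdef
      have hcompl : K.IsComplement' P := MonoidHom.ker_transferSylow_isComplement' P hnc
      have hcardKP : Nat.card ↥K * Nat.card ↥(P : Subgroup G) = Nat.card G := hcompl.card_mul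
      have hKcard0 : Nat.card ↥K ≠ 0 := Nat.card_pos.ne'
      have hKcard : Nat.card ↥K = 1 := by
        by_contra hne
        obtain ⟨q, hq, hqd⟩ := Nat.exists_prime_and_dvd hne
        haveI := Fact.mk hq
        have hqp : q ≠ p := by
          rintro rfl
          have : q ^ 3 ∣ Nat.card G := by
            rw [← hcardKP, hcardP2]
            obtain ⟨t, ht⟩ := hqd
            exact ⟨t, by rw [ht]; ring⟩
          have := (hq.pow_dvd_iff_le_factorization hGcard0).mp this
          omega
        obtain ⟨Q⟩ := (inferInstance : Nonempty (Sylow q ↥K))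
        set Q' := (Q : Subgroup ↥K).map K.subtype with hQ'def
        have hQpg : IsPGroup q ↥Q' := Q.isPGroup'.map K.subtype
        have hfr : Subgroup.normalizer (Q' : Set G) ⊔ K = ⊤ := Sylow.normalizer_sup_eq_top Q
        set N' := Subgroup.normalizer (Q' : Set G) with hN'def
        have hKindex : K.index = p ^ 2 := by rw [hcompl.symm.index_eq_card, hcardP2]
        have hN'dvd : p ^ 2 ∣ Nat.card ↥N' := by
          have h1 : Nat.card (↥N' ⧸ K.subgroupOf N') = K.relIndex (N' ⊔ K) := by
            have e := QuotientGroup.quotientInfEquivProdNormalQuotient N' K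
            rw [Nat.card_congr e.toEquiv]
            rfl
          have h2 : K.relIndex (N' ⊔ K) = p ^ 2 := by
            rw [hfr, Subgroup.relIndex_top_right K, hKindex]
          have h3 := Subgroup.card_eq_card_quotient_mul_card_subgroup (K.subgroupOf N')
          rw [h3, h1, h2]
          exact Dvd.intro _ rfl
        have hN'card0 : Nat.card ↥N' ≠ 0 := Nat.card_pos.ne'
        have hfacN' : (Nat.card ↥N').factorization p = 2 := by
          apply le_antisymm
          · have hdvdG : Nat.card ↥N' ∣ Nat.card G := Subgroup.card_subgroup_dvd_card N'
            have := (Nat.factorization_le_iff_dvd hN'card0 hGcard0).mpr hdvdG p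
            omega
          · exact (hp.pow_dvd_iff_le_factorization hN'card0).mp hN'dvd
        obtain ⟨R⟩ := (inferInstance : Nonempty (Sylow p ↥N'))
        have hcardR : Nat.card ↥(R : Subgroup ↥N') = p ^ 2 := by
          rw [R.card_eq_multiplicity, hfacN']
        set R' := (R : Subgroup ↥N').map N'.subtype with hR'def
        have hcardR' : Nat.card ↥R' = p ^ 2 := by
          rw [← hcardR]
          exact (Nat.card_congr
            (Subgroup.equivMapOfInjective _ _ N'.subtype_injective).toEquiv).symm
        have hRpg : IsPGroup p ↥R' := R.isPGroup'.map N'.subtype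
        obtain ⟨P₂, hRP₂⟩ := hRpg.exists_le_sylow
        have hcardP₂ : Nat.card ↥(P₂ : Subgroup G) = p ^ 2 := by
          rw [P₂.card_eq_multiplicity, ← hn, hn2eq]
        have hR'eq : R' = (P₂ : Subgroup G) :=
          Subgroup.eq_of_le_of_card_ge hRP₂ (by rw [hcardR', hcardP₂])
        obtain ⟨g, hg⟩ := MulAction.exists_smul_eq G P P₂
        set x₂ := g * x * g⁻¹ with hx₂def
        have hx₂P₂ : x₂ ∈ (P₂ : Subgroup G) := by
          rw [← hg]
          have h1 : (MulAut.conj g) • x ∈ (MulAut.conj g) • (P : Subgroup G) :=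
            Subgroup.smul_mem_pointwise_smul x _ _ hxmemP
          simpa [Sylow.coe_subgroup_smul, MulAut.smul_def, MulAut.conj_apply, hx₂def] using h1
        have hx₂N' : x₂ ∈ N' := by
          have : x₂ ∈ R' := hR'eq ▸ hx₂P₂
          exact Subgroup.map_subtype_le _ this
        have hSolP₂ : Sol x₂ = ((P₂ : Subgroup G) : Set G) := by
          rw [hx₂def, sol_conj_s10, ← hSolP, ← hg]
          rfl
        haveI hQ'solv : Group.IsSolvable ↥Q' := solvable_of_isPGroup' hq hQpg
        have hQ'sub : (Q' : Set G) ⊆ ((P₂ : Subgroup G) : Set G) := by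
          intro z hz
          rw [← hSolP₂]
          have hsolv := solvable_closure_of_mem_normalizer Q' hz hx₂N'
          show Group.IsSolvable ↥(Subgroup.closure {x₂, z})
          rwa [Set.pair_comm]
        have hQ'bot : Q' = ⊥ := by
          rw [Subgroup.eq_bot_iff_forall]
          intro z hz
          have hzP : z ∈ (P₂ : Subgroup G) := hQ'sub hz
          obtain ⟨a, ha⟩ := hQpg ⟨z, hz⟩
          obtain ⟨b, hb⟩ := P₂.isPGroup' ⟨z, hzP⟩
          have haz : z ^ q ^ a = 1 := by
            have := congrArg (Subtype.val) ha
            simpa using this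
          have hbz : z ^ p ^ b = 1 := by
            have := congrArg (Subtype.val) hb
            simpa using this
          have h1 : orderOf z ∣ q ^ a := orderOf_dvd_of_pow_eq_one haz
          have h2 : orderOf z ∣ p ^ b := orderOf_dvd_of_pow_eq_one hbz
          have hco : Nat.Coprime (q ^ a) (p ^ b) :=
            Nat.Coprime.pow _ _ ((Nat.coprime_primes hq hp).mpr hqp)
          have : orderOf z = 1 := Nat.eq_one_of_dvd_coprimes hco h1 h2
          exact orderOf_eq_one_iff.mp this
        have hqQ : q ∣ Nat.card ↥(Q : Subgroup ↥K) := by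
          rw [Q.card_eq_multiplicity]
          exact dvd_pow_self q (Nat.Prime.factorization_pos_of_dvd hq hKcard0 hqd).ne'
        have hcardQ' : Nat.card ↥Q' = Nat.card ↥(Q : Subgroup ↥K) := by
          rw [hQ'def]
          exact (Nat.card_congr
            (Subgroup.equivMapOfInjective _ _ K.subtype_injective).toEquiv).symm
        rw [hQ'bot, Subgroup.card_bot] at hcardQ'
        rw [← hcardQ'] at hqQ
        exact absurd (Nat.dvd_one.mp hqQ) hq.ne_one
      apply hsmall
      rw [← hcardKP, hKcard, one_mul, hcardP2]
end

section
/- In the alternating group A_5, for any element x of order 5 one has Sol_G(x) = N_G(⟨x⟩) and |Sol_G(x)| = 10. -/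
lemma fact10' : (Nat.factorization 10) 5 = 1 := by
  rw [show (10:ℕ) = 2 * 5^1 by norm_num, Nat.factorization_mul (by norm_num) (by norm_num)]
  simp [Nat.Prime.factorization_pow, Nat.factorization_eq_zero_of_not_dvd (by norm_num : ¬ (5:ℕ) ∣ 2),
    Nat.Prime.factorization_self (by norm_num : Nat.Prime 5)]

lemma nat_card_perm' {β : Type*} [Finite β] :
    Nat.card (Equiv.Perm β) = Nat.factorial (Nat.card β) := by
  classical
  have : Fintype β := Fintype.ofFinite _
  simp [Nat.card_eq_fintype_card, Fintype.card_perm]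

lemma card_dvd_factorial_index' {G : Type*} [Group G] [Finite G] [IsSimpleGroup G]
    {H : Subgroup G} (h : H ≠ ⊤) : Nat.card G ∣ Nat.factorial H.index := by
  have hcore : H.normalCore = ⊥ := by
    rcases (Subgroup.normalCore_normal H).eq_bot_or_eq_top with h1 | h1
    · exact h1
    · exact absurd (top_le_iff.mp (h1 ▸ Subgroup.normalCore_le H)) h
  have hker : (MulAction.toPermHom G (G ⧸ H)).ker = ⊥ := by
    rw [← Subgroup.normalCore_eq_ker, hcore]
  have hinj := (MulAction.toPermHom G (G ⧸ H)).ker_eq_bot_iff.mp hker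
  have hd := Subgroup.card_dvd_of_injective _ hinj
  rwa [nat_card_perm', ← Subgroup.index_eq_card] at hd

lemma subsingleton_sylow5_of_card10' {H : Type*} [Group H] (h10 : Nat.card H = 10) :
    Subsingleton (Sylow 5 H) := by
  have : Finite H := Nat.finite_of_card_ne_zero (by omega)
  haveI : Fact (Nat.Prime 5) := ⟨by norm_num⟩
  obtain ⟨P⟩ : Nonempty (Sylow 5 H) := inferInstance
  have hcP : Nat.card (P : Subgroup H) = 5 := by
    rw [Sylow.card_eq_multiplicity, h10, fact10', pow_one]
  have h2 := Sylow.card_dvd_index P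
  have hPi : (P : Subgroup H).index = 2 := by
    have := Subgroup.card_mul_index (P : Subgroup H)
    rw [hcP, h10] at this; omega
  rw [hPi] at h2
  have h1 := card_sylow_modEq_one 5 H
  have : Nat.card (Sylow 5 H) = 1 := by
    rcases (Nat.dvd_prime Nat.prime_two).mp h2 with h | h
    · exact h
    · rw [h] at h1; exact absurd h1 (by decide)
  exact (Nat.card_eq_one_iff_unique.mp this).1

lemma solvable_of_cyclic' {H : Type*} [Group H] (h : IsCyclic H) : IsSolvable H := by
  letI := h.commGroup
  exact isSolvable_of_comm fun a b => mul_comm a b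

lemma solvable_of_card_dvd_ten' {H : Type*} [Group H] (h : Nat.card H ∣ 10) : IsSolvable H := by
  have hfin : Finite H := Nat.finite_of_card_ne_zero (fun h0 => by simp [h0] at h)
  haveI : Fact (Nat.Prime 5) := ⟨by norm_num⟩
  haveI : Fact (Nat.Prime 2) := ⟨by norm_num⟩
  have hpos : 0 < Nat.card H := Nat.card_pos
  have hle := Nat.le_of_dvd (by norm_num) h
  have hcases : Nat.card H = 1 ∨ Nat.card H = 2 ∨ Nat.card H = 5 ∨ Nat.card H = 10 := by
    interval_cases hn : Nat.card H <;> omega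
  rcases hcases with h1 | h1 | h1 | h1
  · haveI := (Nat.card_eq_one_iff_unique.mp h1).1
    exact (inferInstance : Group.IsSolvable H)
  · exact solvable_of_cyclic' (isCyclic_of_prime_card (p := 2) h1)
  · exact solvable_of_cyclic' (isCyclic_of_prime_card (p := 5) h1)
  · haveI := subsingleton_sylow5_of_card10' h1
    obtain ⟨P⟩ : Nonempty (Sylow 5 H) := inferInstance
    have hcP : Nat.card (P : Subgroup H) = 5 := by
      rw [Sylow.card_eq_multiplicity, h1, fact10', pow_one]
    have hPi : (P : Subgroup H).index = 2 := by
      have := Subgroup.card_mul_index (P : Subgroup H)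
      rw [hcP, h1] at this; omega
    haveI hnorm : (P : Subgroup H).Normal := by
      rw [← Subgroup.normalizer_eq_top_iff, eq_top_iff]
      intro g _
      exact Sylow.smul_eq_iff_mem_normalizer.mp (Subsingleton.elim _ _)
    haveI : Group.IsSolvable (P : Subgroup H) :=
      solvable_of_cyclic' (isCyclic_of_prime_card (p := 5) hcP)
    haveI : Group.IsSolvable (H ⧸ (P : Subgroup H)) := by
      refine solvable_of_cyclic' (isCyclic_of_prime_card (p := 2) ?_)
      rw [← Subgroup.index_eq_card, hPi]
    exact solvable_of_ker_le_range (P : Subgroup H).subtype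
      (QuotientGroup.mk' (P : Subgroup H))
      (by rw [QuotientGroup.ker_mk', Subgroup.range_subtype])

lemma cardA5' : Nat.card (alternatingGroup (Fin 5)) = 60 := by
  have h := two_mul_card_alternatingGroup (α := Fin 5)
  rw [Nat.card_eq_fintype_card]
  rw [show (Fintype.card (Equiv.Perm (Fin 5))) = 120 by rw [Fintype.card_perm]; simp; rfl] at h
  omega

lemma not_solvable_A5' : ¬ IsSolvable (alternatingGroup (Fin 5)) := by
  intro h
  have hcomm := IsSimpleGroup.comm_iff_isSolvable.mpr h
  letI : CommGroup (alternatingGroup (Fin 5)) :=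
    { (inferInstance : Group (alternatingGroup (Fin 5))) with mul_comm := hcomm }
  have hp := IsSimpleGroup.prime_card (α := alternatingGroup (Fin 5))
  rw [cardA5'] at hp
  norm_num at hp

lemma card_normalizer10 (x : alternatingGroup (Fin 5)) (hx : orderOf x = 5) :
    Nat.card (Subgroup.normalizer (Subgroup.zpowers x : Set (alternatingGroup (Fin 5)))) = 10 := by
  haveI : Fact (Nat.Prime 5) := ⟨by norm_num⟩
  have hcz : Nat.card (Subgroup.zpowers x) = 5 := by rw [Nat.card_zpowers, hx]
  have hzi : (Subgroup.zpowers x).index = 12 := by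
    have := Subgroup.card_mul_index (Subgroup.zpowers x)
    rw [hcz, cardA5'] at this; omega
  have hP : IsPGroup 5 (Subgroup.zpowers x) := IsPGroup.of_card (by rw [hcz, pow_one])
  set P : Sylow 5 (alternatingGroup (Fin 5)) := hP.toSylow (by rw [hzi]; norm_num) with hPdef
  have hPcoe : (P : Subgroup (alternatingGroup (Fin 5))) = Subgroup.zpowers x := rfl
  have h1 := card_sylow_modEq_one 5 (alternatingGroup (Fin 5))
  have h2 := Sylow.card_dvd_index P
  rw [hPcoe, hzi] at h2
  have hne1 : Nat.card (Sylow 5 (alternatingGroup (Fin 5))) ≠ 1 := by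
    intro hone
    haveI := (Nat.card_eq_one_iff_unique.mp hone).1
    have hnorm : (Subgroup.zpowers x).Normal := by
      rw [← hPcoe, ← Subgroup.normalizer_eq_top_iff, eq_top_iff]
      intro g _
      exact Sylow.smul_eq_iff_mem_normalizer.mp (Subsingleton.elim _ _)
    rcases hnorm.eq_bot_or_eq_top with hb | ht
    · rw [hb] at hcz; simp at hcz
    · rw [ht] at hcz
      rw [show Nat.card (⊤ : Subgroup (alternatingGroup (Fin 5))) = 60 from by
        rw [Subgroup.card_top, cardA5']] at hcz
      norm_num at hcz
  have hn6 : Nat.card (Sylow 5 (alternatingGroup (Fin 5))) = 6 := by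
    have hle := Nat.le_of_dvd (by norm_num) h2
    have hpos : 0 < Nat.card (Sylow 5 (alternatingGroup (Fin 5))) := Nat.card_pos
    interval_cases hn : Nat.card (Sylow 5 (alternatingGroup (Fin 5))) <;>
      first
        | rfl
        | (exfalso; revert h2 h1 hne1; decide)
  have hidx := Sylow.card_eq_index_normalizer P
  rw [hn6] at hidx
  change 6 = (Subgroup.normalizer (Subgroup.zpowers x : Set (alternatingGroup (Fin 5)))).index at hidx
  have := Subgroup.card_mul_index (Subgroup.normalizer (Subgroup.zpowers x : Set (alternatingGroup (Fin 5))))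
  rw [← hidx, cardA5'] at this
  omega

theorem stmt17 (x : alternatingGroup (Fin 5)) (hx : orderOf x = 5) :
    Sol x = (Subgroup.normalizer ((Subgroup.zpowers x : Subgroup (alternatingGroup (Fin 5))) : Set (alternatingGroup (Fin 5))) : Set (alternatingGroup (Fin 5))) ∧
    Nat.card (Sol x) = 10 := by
  haveI : Fact (Nat.Prime 5) := ⟨by norm_num⟩
  have hcN : Nat.card (Subgroup.normalizer (Subgroup.zpowers x : Set (alternatingGroup (Fin 5)))) = 10 := card_normalizer10 x hx
  have hseteq : Sol x = (Subgroup.normalizer (Subgroup.zpowers x : Set (alternatingGroup (Fin 5))) : Set (alternatingGroup (Fin 5))) := by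
    ext y
    constructor
    · intro hy
      have hy' : Group.IsSolvable ↥(Subgroup.closure ({x, y} : Set (alternatingGroup (Fin 5)))) := hy
      set H : Subgroup (alternatingGroup (Fin 5)) := Subgroup.closure {x, y} with hHdef
      have hxH : x ∈ H := Subgroup.subset_closure (by simp)
      have hyH : y ∈ H := Subgroup.subset_closure (by simp)
      have hzle : Subgroup.zpowers x ≤ H := (Subgroup.zpowers_le).mpr hxH
      have hne : H ≠ ⊤ := by
        intro ht
        apply not_solvable_A5'
        rw [ht] at hy'
        exact solvable_of_surjective
          (f := (Subgroup.topEquiv (G := alternatingGroup (Fin 5))).toMonoidHom)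
          (Subgroup.topEquiv (G := alternatingGroup (Fin 5))).surjective
      have hd := card_dvd_factorial_index' hne
      rw [cardA5'] at hd
      have hmul := Subgroup.card_mul_index H
      rw [cardA5'] at hmul
      have hi5 : 5 ≤ H.index := by
        by_contra hlt
        push_neg at hlt
        have hf1 : Nat.factorial H.index ≤ 24 :=
          le_trans (Nat.factorial_le (show H.index ≤ 4 by omega)) (by decide)
        have hf2 := Nat.le_of_dvd (Nat.factorial_pos _) hd
        omega
      have hpos : 0 < Nat.card H := Nat.card_pos
      have hcard_le : Nat.card H ≤ 12 := by nlinarith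
      have hordx : orderOf (⟨x, hxH⟩ : H) = 5 := by
        have h' := orderOf_injective H.subtype H.subtype_injective ⟨x, hxH⟩
        rw [show H.subtype ⟨x, hxH⟩ = x from rfl, hx] at h'
        exact h'.symm
      have h5d : (5:ℕ) ∣ Nat.card H := by
        have hh := orderOf_dvd_natCard (⟨x, hxH⟩ : H)
        rwa [hordx] at hh
      have hcases : Nat.card H = 5 ∨ Nat.card H = 10 := by
        have hdvd60 : Nat.card H ∣ 60 := Dvd.intro _ hmul
        interval_cases hc : Nat.card H <;> omega
      rcases hcases with hc | hc
      · have heq : Subgroup.zpowers x = H := by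
          refine Subgroup.eq_of_le_of_card_ge hzle ?_
          rw [Nat.card_zpowers, hx, hc]
        rw [← heq] at hyH
        exact Subgroup.le_normalizer hyH
      · -- card H = 10
        haveI := subsingleton_sylow5_of_card10' (H := H) hc
        set K : Subgroup H := Subgroup.zpowers (⟨x, hxH⟩ : H) with hKdef
        have hcK : Nat.card K = 5 := by rw [Nat.card_zpowers, hordx]
        have hKi : K.index = 2 := by
          have := Subgroup.card_mul_index K
          rw [hcK, hc] at this; omega
        have hKp : IsPGroup 5 K := IsPGroup.of_card (by rw [hcK, pow_one])
        set Q : Sylow 5 H := hKp.toSylow (by rw [hKi]; norm_num) with hQdef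
        have hQcoe : (Q : Subgroup H) = K := rfl
        have hQnormal : (Q : Subgroup H).Normal := by
          rw [← Subgroup.normalizer_eq_top_iff, eq_top_iff]
          intro g _
          exact Sylow.smul_eq_iff_mem_normalizer.mp (Subsingleton.elim _ _)
        have key : ∀ h ∈ H, ∀ g ∈ Subgroup.zpowers x,
            h * g * h⁻¹ ∈ Subgroup.zpowers x := by
          intro h hh g hg
          obtain ⟨k, hk⟩ := Subgroup.mem_zpowers_iff.mp hg
          have hconj : (⟨h, hh⟩ : H) * ⟨x, hxH⟩ * (⟨h, hh⟩ : H)⁻¹ ∈ K := by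
            rw [← hQcoe]
            exact hQnormal.conj_mem _ (hQcoe ▸ Subgroup.mem_zpowers _) _
          obtain ⟨m, hm⟩ := Subgroup.mem_zpowers_iff.mp hconj
          have hm' : h * x * h⁻¹ = x ^ m := by
            have := congrArg (Subtype.val) hm
            simpa using this.symm
          subst hk
          have hcalc : h * x ^ k * h⁻¹ = x ^ (m * k) := by
            rw [← conj_zpow, hm', ← zpow_mul]
          rw [hcalc]
          exact Subgroup.zpow_mem _ (Subgroup.mem_zpowers x) _
        have hy2 : y ∈ Subgroup.normalizer (Subgroup.zpowers x : Set (alternatingGroup (Fin 5))) := by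
          rw [Subgroup.mem_normalizer_iff]
          intro g
          constructor
          · intro hg
            exact key y hyH g hg
          · intro hg
            have := key y⁻¹ (H.inv_mem hyH) _ hg
            simpa [mul_assoc] using this
        exact hy2
    · intro hy
      have hyN : y ∈ Subgroup.normalizer (Subgroup.zpowers x : Set (alternatingGroup (Fin 5))) := hy
      have hxN : x ∈ Subgroup.normalizer (Subgroup.zpowers x : Set (alternatingGroup (Fin 5))) :=
        Subgroup.le_normalizer (Subgroup.mem_zpowers x)
      have hle : Subgroup.closure ({x, y} : Set (alternatingGroup (Fin 5))) ≤
          Subgroup.normalizer (Subgroup.zpowers x : Set (alternatingGroup (Fin 5))) := by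
        rw [Subgroup.closure_le]
        rintro z (rfl | rfl)
        · exact hxN
        · exact hyN
      have hdvd : Nat.card (Subgroup.closure ({x, y} : Set (alternatingGroup (Fin 5)))) ∣ 10 :=
        hcN ▸ Subgroup.card_dvd_of_le hle
      exact solvable_of_card_dvd_ten' hdvd
  refine ⟨hseteq, ?_⟩
  rw [hseteq]
  simpa using hcN
end

section
/- Let G be a finite insoluble group and x ∈ G. Then the cardinality of Sol_G(x) is not a prime number. -/
open Subgroup Pointwise

section Aux

variable {G : Type*} [Group G]

lemma isSolvable_of_mulEquiv {A B : Type*} [Group A] [Group B] (e : A ≃* B)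
    (h : IsSolvable A) : IsSolvable B := by
  haveI : Group.IsSolvable A := h
  exact solvable_of_surjective (f := e.toMonoidHom) e.surjective

lemma isSolvable_of_le {A B : Subgroup G} (h : A ≤ B) (hB : IsSolvable B) : IsSolvable A := by
  haveI : Group.IsSolvable B := hB
  exact solvable_of_solvable_injective (Subgroup.inclusion_injective h)

lemma isSolvable_of_card_prime {A : Type*} [Group A] {p : ℕ} (hp : p.Prime)
    (h : Nat.card A = p) : IsSolvable A := by
  haveI : Fact p.Prime := ⟨hp⟩
  haveI := isCyclic_of_prime_card h
  obtain ⟨g, hg⟩ := IsCyclic.exists_generator (α := A)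
  apply isSolvable_of_comm
  intro a b
  obtain ⟨m, hm⟩ := Subgroup.mem_zpowers_iff.mp (hg a)
  obtain ⟨k, hk⟩ := Subgroup.mem_zpowers_iff.mp (hg b)
  rw [← hm, ← hk, ← zpow_add, ← zpow_add, add_comm]

lemma solvable_closure_of_mem_normalizer_s19 {x y : G}
    (hy : y ∈ normalizer (zpowers x : Set G)) : IsSolvable ↥(Subgroup.closure {x, y}) := by
  set K := Subgroup.closure {x, y} with hK
  have hxK : x ∈ K := subset_closure (Set.mem_insert _ _)
  have hyK : y ∈ K := subset_closure (Set.mem_insert_of_mem _ rfl)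
  have hHK : zpowers x ≤ K := zpowers_le.mpr hxK
  have hKnorm : K ≤ normalizer (zpowers x : Set G) := by
    rw [hK, closure_le]
    rintro z hz
    simp only [Set.mem_insert_iff, Set.mem_singleton_iff] at hz
    rcases hz with rfl | rfl
    · exact le_normalizer (mem_zpowers z)
    · exact hy
  haveI hnormal : ((zpowers x).subgroupOf K).Normal := by
    rw [normal_subgroupOf_iff hHK]
    intro h g hh hg
    exact (mem_normalizer_iff.mp (hKnorm hg) h).mp hh
  set H' := (zpowers x).subgroupOf K with hH'
  have hquot : IsSolvable (K ⧸ H') := by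
    have hgen : ∀ z : K ⧸ H',
        z ∈ zpowers ((QuotientGroup.mk (⟨y, hyK⟩ : K)) : K ⧸ H') := by
      intro z
      obtain ⟨k, rfl⟩ := QuotientGroup.mk_surjective z
      obtain ⟨g, hg⟩ := k
      have : ∀ (g : G) (hg : g ∈ K),
          (QuotientGroup.mk (⟨g, hg⟩ : K) : K ⧸ H') ∈
            zpowers ((QuotientGroup.mk (⟨y, hyK⟩ : K)) : K ⧸ H') := by
        intro g hg
        induction hg using closure_induction with
        | mem z hz =>
          simp only [Set.mem_insert_iff, Set.mem_singleton_iff] at hz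
          rcases hz with rfl | rfl
          · have : (QuotientGroup.mk (⟨z, hxK⟩ : K) : K ⧸ H') = 1 := by
              rw [QuotientGroup.eq_one_iff]
              exact mem_subgroupOf.mpr (mem_zpowers z)
            rw [this]
            exact one_mem _
          · exact mem_zpowers _
        | one => exact one_mem _
        | mul a b ha hb iha ihb =>
          exact mul_mem iha ihb
        | inv a ha iha =>
          exact inv_mem iha
      exact this g hg
    apply isSolvable_of_comm
    intro a b
    obtain ⟨m, hm⟩ := Subgroup.mem_zpowers_iff.mp (hgen a)
    obtain ⟨k, hk⟩ := Subgroup.mem_zpowers_iff.mp (hgen b)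
    rw [← hm, ← hk, ← zpow_add, ← zpow_add, add_comm]
  have hH'solv : IsSolvable H' := by
    apply isSolvable_of_comm
    rintro ⟨⟨a, haK⟩, ha⟩ ⟨⟨b, hbK⟩, hb⟩
    have ha' : a ∈ zpowers x := mem_subgroupOf.mp ha
    have hb' : b ∈ zpowers x := mem_subgroupOf.mp hb
    obtain ⟨m, hm⟩ := Subgroup.mem_zpowers_iff.mp ha'
    obtain ⟨k, hk⟩ := Subgroup.mem_zpowers_iff.mp hb'
    apply Subtype.ext; apply Subtype.ext
    show a * b = b * a
    rw [← hm, ← hk, ← zpow_add, ← zpow_add, add_comm]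
  haveI : Group.IsSolvable (K ⧸ H') := hquot
  haveI : Group.IsSolvable H' := hH'solv
  exact solvable_of_ker_le_range H'.subtype (QuotientGroup.mk' H')
    (by rw [QuotientGroup.ker_mk', Subgroup.range_subtype])

lemma zpowers_subset_sol (x : G) : (zpowers x : Set G) ⊆ Sol x := fun _y hy =>
  solvable_closure_of_mem_normalizer_s19 (le_normalizer hy)

lemma card_zpowers_dvd_card_sol [Finite G] (x : G) :
    Nat.card (zpowers x) ∣ Nat.card (Sol x) := by
  have hinv : ∀ y ∈ Sol x, ∀ h ∈ zpowers x, y * h ∈ Sol x := by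
    intro y hy h hh
    have hcl : Subgroup.closure {x, y * h} = Subgroup.closure {x, y} := by
      apply le_antisymm
      · rw [closure_le]
        rintro z hz
        simp only [Set.mem_insert_iff, Set.mem_singleton_iff] at hz
        rcases hz with rfl | rfl
        · exact subset_closure (Set.mem_insert _ _)
        · exact mul_mem (subset_closure (Set.mem_insert_of_mem _ rfl))
            (zpowers_le.mpr (subset_closure (Set.mem_insert _ _)) hh)
      · rw [closure_le]
        rintro z hz
        simp only [Set.mem_insert_iff, Set.mem_singleton_iff] at hz
        rcases hz with rfl | rfl
        · exact subset_closure (Set.mem_insert _ _)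
        · have h2 := mul_mem
            (Subgroup.subset_closure (k := ({x, z * h} : Set G)) (Set.mem_insert_of_mem _ rfl))
            (inv_mem (zpowers_le.mpr (Subgroup.subset_closure (Set.mem_insert _ _)) hh))
          simpa using h2
    show IsSolvable ↥(Subgroup.closure {x, y * h})
    rw [hcl]
    exact hy
  set H := zpowers x with hHdef
  have hpre : (QuotientGroup.mk (s := H)) ⁻¹' (QuotientGroup.mk '' (Sol x) : Set (G ⧸ H)) =
      Sol x := by
    apply Set.Subset.antisymm
    · rintro a ⟨s, hs, hmk⟩
      have hsa : s⁻¹ * a ∈ H := QuotientGroup.eq.mp hmk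
      have := hinv s hs _ hsa
      rwa [mul_inv_cancel_left] at this
    · intro a ha
      exact ⟨a, ha, rfl⟩
  have e := QuotientGroup.preimageMkEquivSubgroupProdSet H (QuotientGroup.mk '' (Sol x))
  rw [hpre] at e
  rw [Nat.card_congr e, Nat.card_prod]
  exact dvd_mul_right _ _

lemma sol_subgroup_iff {K : Subgroup G} {x : G} (hx : x ∈ K) (y : ↥K) :
    y ∈ Sol (⟨x, hx⟩ : ↥K) ↔ (y : G) ∈ Sol x := by
  have hmap : (Subgroup.closure {(⟨x, hx⟩ : ↥K), y}).map K.subtype =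
      Subgroup.closure {x, (y : G)} := by
    rw [MonoidHom.map_closure]
    congr 1
    rw [Set.image_insert_eq, Set.image_singleton]
    rfl
  have e : ↥(Subgroup.closure {(⟨x, hx⟩ : ↥K), y}) ≃* ↥(Subgroup.closure {x, (y : G)}) := by
    rw [← hmap]
    exact Subgroup.equivMapOfInjective _ _ K.subtype_injective
  exact ⟨fun h => isSolvable_of_mulEquiv e h, fun h => isSolvable_of_mulEquiv e.symm h⟩

end Aux

section Main

universe u

lemma card_set_coe {G : Type u} [Group G] (A : Subgroup G) :
    Nat.card ↥(A : Set G) = Nat.card ↥A :=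
  Nat.card_congr (Equiv.subtypeEquivRight fun _ => Iff.rfl)

lemma subgroup_eq_of_le_of_card_le {G : Type u} [Group G] [Finite G] {A B : Subgroup G}
    (h : A ≤ B) (hc : Nat.card ↥B ≤ Nat.card ↥A) : A = B := by
  apply SetLike.ext'
  apply Set.eq_of_subset_of_ncard_le h
  · rw [← Nat.card_coe_set_eq, ← Nat.card_coe_set_eq, card_set_coe, card_set_coe]
    exact hc

private theorem sol_aux : ∀ (n : ℕ) (G : Type u) [Group G] [Finite G], Nat.card G = n →
    ¬ IsSolvable G → ∀ x : G, ¬ (Nat.card (Sol x)).Prime := by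
  intro n
  induction n using Nat.strong_induction_on with
  | _ n IH =>
  intro G _ _ hn hG x hp
  classical
  set H := zpowers x with hHdef
  have hHsub : (H : Set G) ⊆ Sol x := zpowers_subset_sol x
  have hdvd : Nat.card ↥H ∣ Nat.card (Sol x) := card_zpowers_dvd_card_sol x
  rcases Nat.Prime.eq_one_or_self_of_dvd hp _ hdvd with h1 | hcardH
  · -- case x = 1
    have hx1 : x = 1 := by
      rw [Nat.card_zpowers] at h1
      exact orderOf_eq_one_iff.mp h1
    subst hx1
    have hSol : Sol (1 : G) = Set.univ := by
      apply Set.eq_univ_of_forall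
      intro y
      apply solvable_closure_of_mem_normalizer_s19
      rw [zpowers_one_eq_bot, Subgroup.normalizer_eq_top_iff.mpr inferInstance]
      exact mem_top y
    rw [hSol] at hp
    have hcard : Nat.card ↥(Set.univ : Set G) = Nat.card G := Nat.card_congr (Equiv.Set.univ G)
    rw [hcard] at hp
    exact hG (isSolvable_of_card_prime hp rfl)
  · -- case |⟨x⟩| = p
    set p := Nat.card (Sol x) with hpdef
    haveI hpfact : Fact p.Prime := ⟨hp⟩
    have hSol : Sol x = (H : Set G) := by
      symm
      apply Set.eq_of_subset_of_ncard_le hHsub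
      rw [← Nat.card_coe_set_eq, ← Nat.card_coe_set_eq, card_set_coe, hcardH]
    -- every proper subgroup containing x is contained in H
    have key : ∀ K : Subgroup G, x ∈ K → K ≠ ⊤ → K ≤ H := by
      intro K hxK hKtop
      have hcardK : Nat.card ↥K < n := by
        rw [← hn]
        exact lt_of_le_of_ne (card_le_card_group K) fun h => hKtop (eq_top_of_card_eq K h)
      have hKsolv : IsSolvable ↥K := by
        by_contra hKs
        refine IH _ hcardK ↥K rfl hKs ⟨x, hxK⟩ ?_
        have h1 : Sol (⟨x, hxK⟩ : ↥K) = (Subtype.val ⁻¹' (Sol x) : Set ↥K) :=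
          Set.ext fun y => sol_subgroup_iff hxK y
        have h2 : (Subtype.val ⁻¹' (Sol x) : Set ↥K) = ((H.subgroupOf K : Subgroup ↥K) : Set ↥K) := by
          rw [hSol]; rfl
        rw [h1, h2, card_set_coe,
          Nat.card_congr (Subgroup.subgroupOfEquivOfLe (zpowers_le.mpr hxK)).toEquiv, hcardH]
        exact hp
      intro k hk
      have hcl : IsSolvable ↥(Subgroup.closure {x, k}) := by
        refine isSolvable_of_le ?_ hKsolv
        rw [closure_le]
        rintro z hz
        simp only [Set.mem_insert_iff, Set.mem_singleton_iff] at hz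
        rcases hz with rfl | rfl
        · exact hxK
        · exact hk
      have : k ∈ Sol x := hcl
      rwa [hSol] at this
    -- the normalizer of H is H
    have hnorm : normalizer (H : Set G) = H := by
      apply le_antisymm _ le_normalizer
      intro y hy
      have : y ∈ Sol x := solvable_closure_of_mem_normalizer_s19 hy
      rwa [hSol] at this
    -- H is a Sylow p-subgroup
    haveI : Finite (Subgroup G) :=
      Finite.of_injective (fun K : Subgroup G => (K : Set G)) SetLike.coe_injective
    haveI : Finite (Sylow p G) :=
      Finite.of_injective (fun P : Sylow p G => (P : Subgroup G))
        (fun P Q h => Sylow.ext h)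
    have hpgroupH : IsPGroup p ↥H := IsPGroup.of_card (by rw [hcardH, pow_one])
    obtain ⟨P, hHP⟩ := hpgroupH.exists_le_sylow
    have hPH : (P : Subgroup G) = H := by
      by_contra hne
      have hlt : H.subgroupOf ↑P < ⊤ := by
        rw [lt_top_iff_ne_top]
        intro htop
        exact hne (le_antisymm (subgroupOf_eq_top.mp htop) hHP)
      haveI : Group.IsNilpotent ↥(P : Subgroup G) := P.isPGroup'.isNilpotent
      obtain ⟨z, hz_mem, hz_not⟩ :=
        SetLike.exists_of_lt (normalizerCondition_of_isNilpotent _ hlt)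
      have hzH : (z : G) ∈ normalizer (H : Set G) := by
        rw [mem_normalizer_iff]
        intro g
        constructor
        · intro hg
          have hgP : g ∈ (P : Subgroup G) := hHP hg
          have : (⟨g, hgP⟩ : ↥(P : Subgroup G)) ∈ H.subgroupOf ↑P := mem_subgroupOf.mpr hg
          have := (mem_normalizer_iff.mp hz_mem ⟨g, hgP⟩).mp this
          exact mem_subgroupOf.mp this
        · intro hg
          have hwP : ((z : G) * g * (z : G)⁻¹) ∈ (P : Subgroup G) := hHP hg
          have hzkz : z * (z⁻¹ * ⟨_, hwP⟩ * z) * z⁻¹ = (⟨_, hwP⟩ : ↥(P : Subgroup G)) := by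
            group
          have hk_mem : z⁻¹ * ⟨_, hwP⟩ * z ∈ H.subgroupOf ↑P :=
            (mem_normalizer_iff.mp hz_mem _).mpr (by rw [hzkz]; exact mem_subgroupOf.mpr hg)
          have hmem : ((z⁻¹ * ⟨_, hwP⟩ * z : ↥(P : Subgroup G)) : G) ∈ H :=
            mem_subgroupOf.mp hk_mem
          have hkg : ((z⁻¹ * ⟨_, hwP⟩ * z : ↥(P : Subgroup G)) : G) = g := by
            push_cast
            group
          rwa [hkg] at hmem
      rw [hnorm] at hzH
      exact hz_not (mem_subgroupOf.mpr hzH)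
    -- Burnside's normal p-complement theorem
    have hcent : normalizer ((P : Subgroup G) : Set G) ≤
        Subgroup.centralizer ((P : Subgroup G) : Set G) := by
      rw [hPH, hnorm]
      intro h hh
      rw [Subgroup.mem_centralizer_iff]
      intro g hg
      obtain ⟨m, hm⟩ := Subgroup.mem_zpowers_iff.mp (SetLike.mem_coe.mp hg)
      obtain ⟨k, hk⟩ := Subgroup.mem_zpowers_iff.mp hh
      rw [← hm, ← hk, ← zpow_add, ← zpow_add, add_comm]
    set N := (MonoidHom.transferSylow P hcent).ker with hNdef
    have hcompl : N.IsComplement' ↑P := MonoidHom.ker_transferSylow_isComplement' P hcent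
    have hNindex : (P : Subgroup G).index = Nat.card ↥N := hcompl.index_eq_card
    have hcardG : Nat.card ↥(P : Subgroup G) * (P : Subgroup G).index = Nat.card G :=
      Subgroup.card_mul_index _
    have hcardPG : p * Nat.card ↥N = Nat.card G := by
      rw [← hcardG, hNindex, hPH, hcardH]
    have hpN : ¬ p ∣ Nat.card ↥N := MonoidHom.not_dvd_card_ker_transferSylow P hcent
    haveI hNnormal : N.Normal := MonoidHom.normal_ker _
    have hNinsol : ¬ IsSolvable ↥N := by
      intro hNs
      apply hG
      have hqcard : Nat.card (G ⧸ N) = p := by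
        have h1 : Nat.card G = Nat.card (G ⧸ N) * Nat.card ↥N :=
          Subgroup.card_eq_card_quotient_mul_card_subgroup N
        have h2 : 0 < Nat.card ↥N := Nat.card_pos
        apply Nat.eq_of_mul_eq_mul_right h2
        rw [← h1, hcardPG]
      haveI : Group.IsSolvable ↥N := hNs
      haveI : Group.IsSolvable (G ⧸ N) := isSolvable_of_card_prime hp hqcard
      exact solvable_of_ker_le_range N.subtype (QuotientGroup.mk' N)
        (by rw [QuotientGroup.ker_mk', Subgroup.range_subtype])
    have hNne1 : Nat.card ↥N ≠ 1 := by
      intro h1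
      haveI : Subsingleton ↥N := (Nat.card_eq_one_iff_unique.mp h1).1
      exact hNinsol (isSolvable_of_comm fun a b => Subsingleton.elim _ _)
    set q := (Nat.card ↥N).minFac with hqdef
    have hqprime : q.Prime := Nat.minFac_prime hNne1
    haveI : Fact q.Prime := ⟨hqprime⟩
    have hqN : q ∣ Nat.card ↥N := Nat.minFac_dvd _
    haveI : Finite (Sylow q G) :=
      Finite.of_injective (fun R : Sylow q G => (R : Subgroup G)) (fun R S h => Sylow.ext h)
    have hndvd : ¬ p ∣ Nat.card (Sylow q ↥N) := by
      intro hd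
      obtain ⟨Q₀⟩ := (inferInstance : Nonempty (Sylow q ↥N))
      have h1 : Nat.card (Sylow q ↥N) = (normalizer ((Q₀ : Subgroup ↥N) : Set ↥N)).index :=
        Sylow.card_eq_index_normalizer Q₀
      have h2 : (normalizer ((Q₀ : Subgroup ↥N) : Set ↥N)).index ∣ Nat.card ↥N :=
        Subgroup.index_dvd_card _
      rw [h1] at hd
      exact hpN (dvd_trans hd h2)
    letI : MulAction ↥H (Sylow q ↥N) :=
      MulAction.compHom _ ((MulAut.conjNormal (H := N)).comp H.subtype)
    obtain ⟨Q, hQfix⟩ :=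
      hpgroupH.nonempty_fixed_point_of_prime_not_dvd_card (Sylow q ↥N) hndvd
    have hfixG : ∀ z, z ∈ H →
        (MulAut.conjNormal (H := N) z) • (Q : Subgroup ↥N) = (Q : Subgroup ↥N) := by
      intro z hz
      have h1 : (⟨z, hz⟩ : ↥H) • Q = Q := hQfix ⟨z, hz⟩
      exact congrArg Sylow.toSubgroup h1
    set M := (Q : Subgroup ↥N).map N.subtype with hMdef
    have hMN : M ≤ N := map_subtype_le _
    have hconj : ∀ z ∈ H, ∀ g ∈ M, z * g * z⁻¹ ∈ M := by
      intro z hz g hg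
      obtain ⟨m, hmQ, rfl⟩ := Subgroup.mem_map.mp hg
      refine Subgroup.mem_map.mpr ⟨MulAut.conjNormal (H := N) z m, ?_, ?_⟩
      · rw [← hfixG z hz]
        exact Subgroup.smul_mem_pointwise_smul m _ _ hmQ
      · simp only [Subgroup.coe_subtype]; exact MulAut.conjNormal_apply (H := N) z m
    have hxnormM : x ∈ normalizer (M : Set G) := by
      rw [mem_normalizer_iff]
      intro g
      constructor
      · exact fun hg => hconj x (mem_zpowers x) g hg
      · intro hg
        have h2 := hconj x⁻¹ (inv_mem (mem_zpowers x)) _ hg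
        have heq : x⁻¹ * (x * g * x⁻¹) * x⁻¹⁻¹ = g := by group
        rwa [heq] at h2
    have hcardQM : Nat.card ↥(Q : Subgroup ↥N) = Nat.card ↥M :=
      Nat.card_congr (Subgroup.equivMapOfInjective _ _ N.subtype_injective).toEquiv
    have hqQ : q ∣ Nat.card ↥(Q : Subgroup ↥N) := by
      have h1 : Nat.card ↥(Q : Subgroup ↥N) * (Q : Subgroup ↥N).index = Nat.card ↥N :=
        Subgroup.card_mul_index _
      have h2 : ¬ q ∣ (Q : Subgroup ↥N).index := Q.not_dvd_index
      have h3 := hqN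
      rw [← h1] at h3
      rcases (Nat.Prime.dvd_mul hqprime).mp h3 with h | h
      · exact h
      · exact absurd h h2
    have hMbot : M ≠ ⊥ := by
      intro hb
      rw [hb, Subgroup.card_bot] at hcardQM
      rw [hcardQM] at hqQ
      exact hqprime.one_lt.ne' (Nat.dvd_one.mp hqQ)
    have hMneN : M ≠ N := by
      intro hMN_eq
      have hQtop : ∀ g : ↥N, g ∈ (Q : Subgroup ↥N) := by
        intro g
        have hgM : (g : G) ∈ M := by rw [hMN_eq]; exact g.2
        obtain ⟨m, hmQ, hme⟩ := Subgroup.mem_map.mp hgM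
        have hmg : m = g := Subtype.ext hme
        rwa [← hmg]
      have hNq : IsPGroup q ↥N := by
        intro g
        obtain ⟨k, hk⟩ := Q.2 ⟨g, hQtop g⟩
        refine ⟨k, ?_⟩
        have := congrArg Subtype.val hk
        simpa using this
      haveI := hNq.isNilpotent
      exact hNinsol (inferInstance : Group.IsSolvable ↥N)
    have hcardMN : Nat.card ↥M < Nat.card ↥N := by
      have hle : Nat.card ↥M ≤ Nat.card ↥N :=
        Nat.le_of_dvd Nat.card_pos (Subgroup.card_dvd_of_le hMN)
      refine lt_of_le_of_ne hle fun he => hMneN ?_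
      exact subgroup_eq_of_le_of_card_le hMN (le_of_eq he.symm)
    have hKne : M ⊔ H ≠ ⊤ := by
      intro htop
      have hnormtop : normalizer (M : Set G) = ⊤ := by
        apply le_antisymm le_top
        rw [← htop]
        exact sup_le le_normalizer (zpowers_le.mpr hxnormM)
      haveI hMnormal : M.Normal := Subgroup.normalizer_eq_top_iff.mp hnormtop
      have hsurj : Function.Surjective ((QuotientGroup.mk' M).comp H.subtype) := by
        rw [← MonoidHom.range_eq_top, MonoidHom.range_comp, Subgroup.range_subtype]
        have hmaps : Subgroup.map (QuotientGroup.mk' M) (M ⊔ H) = ⊤ := by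
          rw [htop]
          exact Subgroup.map_top_of_surjective _ (QuotientGroup.mk'_surjective M)
        rw [Subgroup.map_sup] at hmaps
        have hbot : Subgroup.map (QuotientGroup.mk' M) M = ⊥ := by
          rw [eq_bot_iff]
          rintro w hw
          obtain ⟨m, hm, rfl⟩ := Subgroup.mem_map.mp hw
          rw [mem_bot]
          exact (QuotientGroup.eq_one_iff m).mpr hm
        rw [hbot, bot_sup_eq] at hmaps
        exact hmaps
      have hle : Nat.card (G ⧸ M) ≤ Nat.card ↥H := Nat.card_le_card_of_surjective _ hsurj
      have h1 : Nat.card G = Nat.card (G ⧸ M) * Nat.card ↥M :=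
        Subgroup.card_eq_card_quotient_mul_card_subgroup M
      have h2 : Nat.card G ≤ p * Nat.card ↥M := by
        rw [h1]
        exact Nat.mul_le_mul_right _ (by rw [hcardH] at hle; exact hle)
      have h3 : p * Nat.card ↥M < p * Nat.card ↥N :=
        mul_lt_mul_of_pos_left hcardMN hp.pos
      rw [hcardPG] at h3
      exact absurd (lt_of_le_of_lt h2 h3) (lt_irrefl _)
    have hKH : M ⊔ H ≤ H :=
      key _ ((le_sup_right : H ≤ M ⊔ H) (mem_zpowers x)) hKne
    have hMinf : M ≤ H ⊓ N := le_inf (le_trans le_sup_left hKH) hMN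
    have hHN : H ⊓ N = ⊥ := by
      have hdis : Disjoint N ↑P := hcompl.disjoint
      rw [hPH] at hdis
      rw [inf_comm]
      exact disjoint_iff.mp hdis
    rw [hHN] at hMinf
    exact hMbot (le_bot_iff.mp hMinf)

end Main

theorem stmt19 {G : Type*} [Group G] [Finite G] (hG : ¬ IsSolvable G) (x : G) :
    ¬ (Nat.card (Sol x)).Prime :=
  sol_aux (Nat.card G) G rfl hG x
end
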